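/- arXiv:1812.06911 — 6 statements merged into one kernel-verified Lean document; each statement's English description precedes it below -/
import Mathlib

section
/- Let t₀ > 0. For all w, v ∈ X_{t₀} (both equal to g off Ω), the operator 𝔗 satisfies the estimate |||𝔗(w) − 𝔗(v)||| ≤ M(μ(Ω) + μ(F′)) · t₀ · |||w − v||| + ‖w(·,0) − v(·,0)‖_{L¹(Ω)}. -/
open MeasureTheory Set

attribute [local instance] Classical.propDecidable

lemma bddAbove_aux {G : Type*} [MeasurableSpace G] (μ : Measure G) (Ω : Set G) (t₀ : ℝ)
    (w : G → ℝ → ℝ)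
    (hint : ∀ t ∈ Icc (0:ℝ) t₀, IntegrableOn (fun x => w x t) Ω μ)
    (hcont : ∀ s ∈ Icc (0:ℝ) t₀,
      Filter.Tendsto (fun t => ∫ x in Ω, |w x t - w x s| ∂μ)
        (nhdsWithin s (Icc (0:ℝ) t₀)) (nhds 0)) :
    BddAbove (Set.range fun t : Icc (0:ℝ) t₀ => ∫ x in Ω, |w x (t : ℝ)| ∂μ) := by
  set f : ℝ → ℝ := fun t => ∫ x in Ω, |w x t| ∂μ with hf
  have hcf : ContinuousOn f (Icc (0:ℝ) t₀) := by
    intro s hs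
    rw [ContinuousWithinAt, tendsto_iff_dist_tendsto_zero]
    apply squeeze_zero' (Filter.Eventually.of_forall fun t => dist_nonneg) ?_ (hcont s hs)
    filter_upwards [self_mem_nhdsWithin] with t ht
    rw [Real.dist_eq, abs_sub_le_iff]
    have h1 : ∀ x, |w x t| - |w x s| ≤ |w x t - w x s| := fun x =>
      abs_sub_abs_le_abs_sub _ _
    have h2 : ∀ x, |w x s| - |w x t| ≤ |w x t - w x s| := fun x => by
      have := abs_sub_abs_le_abs_sub (w x s) (w x t); rwa [abs_sub_comm] at this
    constructor
    · rw [← integral_sub ((hint t ht).abs) ((hint s hs).abs)]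
      exact integral_mono (((hint t ht).abs).sub ((hint s hs).abs))
        ((hint t ht).sub (hint s hs)).abs h1
    · rw [← integral_sub ((hint s hs).abs) ((hint t ht).abs)]
      exact integral_mono (((hint s hs).abs).sub ((hint t ht).abs))
        ((hint t ht).sub (hint s hs)).abs h2
  have hbdd := (isCompact_Icc.image_of_continuousOn hcf).bddAbove
  rw [Set.image_eq_range] at hbdd
  exact hbdd


/-- The nonlocal fixed-point operator `𝔗`. -/
noncomputable def nonlocalT {G : Type*} [MeasurableSpace G] (μ : Measure G) (Ω : Set G)
    (K : G → G → ℝ) (g : G → ℝ → ℝ) (w : G → ℝ → ℝ) : G → ℝ → ℝ :=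
  fun x t =>
    if x ∈ Ω then w x 0 + ∫ r in (0:ℝ)..t, ∫ y, K x y * (w y r - w x r) ∂μ
    else g x t

/-- Membership in the space `X_{t₀}`: measurable, equal to the boundary datum `g`
off `Ω`, and `t ↦ w(·,t)|_Ω` continuous from `[0,t₀]` into `L¹(Ω,μ)`. -/
def MemX {G : Type*} [MeasurableSpace G] (μ : Measure G) (Ω : Set G)
    (g : G → ℝ → ℝ) (t₀ : ℝ) (w : G → ℝ → ℝ) : Prop :=
  Measurable (fun p : G × ℝ => w p.1 p.2) ∧
  (∀ x ∉ Ω, ∀ t ∈ Icc (0:ℝ) t₀, w x t = g x t) ∧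
  (∀ t ∈ Icc (0:ℝ) t₀, IntegrableOn (fun x => w x t) Ω μ) ∧
  (∀ s ∈ Icc (0:ℝ) t₀,
    Filter.Tendsto (fun t => ∫ x in Ω, |w x t - w x s| ∂μ)
      (nhdsWithin s (Icc (0:ℝ) t₀)) (nhds 0))

/-- The norm `|||w||| = max_{0 ≤ t ≤ t₀} ‖w(·,t)‖_{L¹(Ω)}`. -/
noncomputable def tripleNorm {G : Type*} [MeasurableSpace G] (μ : Measure G) (Ω : Set G)
    (t₀ : ℝ) (w : G → ℝ → ℝ) : ℝ :=
  ⨆ t : Icc (0:ℝ) t₀, ∫ x in Ω, |w x (t : ℝ)| ∂μ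

/-- For `w, v ∈ X_{t₀}`, the operator `𝔗` satisfies
`|||𝔗(w) − 𝔗(v)||| ≤ M(μ(Ω)+μ(F′)) t₀ |||w − v||| + ‖w(·,0) − v(·,0)‖_{L¹(Ω)}`. -/
theorem stmt0 {G : Type*} [MeasurableSpace G] (μ : Measure G) (Ω F' : Set G)
    (hΩm : MeasurableSet Ω) (hF'm : MeasurableSet F')
    (hΩfin : μ Ω < ⊤) (hF'fin : μ F' < ⊤)
    (K : G → G → ℝ) (hKmeas : Measurable (fun p : G × G => K p.1 p.2))
    (hKnonneg : ∀ x y, 0 ≤ K x y)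
    (hKsupp : ∀ x y, (x, y) ∉ Ω ×ˢ F' → K x y = 0)
    (M : ℝ) (hM : 0 < M) (hKle : ∀ x y, K x y ≤ M)
    (g : G → ℝ → ℝ) (hgmeas : Measurable (fun p : G × ℝ => g p.1 p.2))
    (hgbdd : ∃ C, ∀ x t, |g x t| ≤ C)
    (t₀ : ℝ) (ht₀ : 0 < t₀)
    (w v : G → ℝ → ℝ) (hw : MemX μ Ω g t₀ w) (hv : MemX μ Ω g t₀ v) :
    tripleNorm μ Ω t₀ (fun x t => nonlocalT μ Ω K g w x t - nonlocalT μ Ω K g v x t) ≤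
      M * ((μ Ω).toReal + (μ F').toReal) * t₀ *
        tripleNorm μ Ω t₀ (fun x t => w x t - v x t) +
      ∫ x in Ω, |w x 0 - v x 0| ∂μ := by
  obtain ⟨C₀, hC₀⟩ := hgbdd
  set C : ℝ := max C₀ 0 with hCdef
  have hC : ∀ x t, |g x t| ≤ C := fun x t => (hC₀ x t).trans (le_max_left _ _)
  have hCnn : 0 ≤ C := le_max_right _ _
  obtain ⟨hwmeas, hwg, hwint, hwcont⟩ := hw
  obtain ⟨hvmeas, hvg, hvint, hvcont⟩ := hv
  set u : G → ℝ → ℝ := fun x r => w x r - v x r with hudef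
  have humeas : Measurable (fun p : G × ℝ => u p.1 p.2) := hwmeas.sub hvmeas
  -- section measurability
  have hsecw : ∀ r : ℝ, Measurable fun y => w y r := fun r =>
    hwmeas.comp (measurable_id.prodMk measurable_const)
  have hsecv : ∀ r : ℝ, Measurable fun y => v y r := fun r =>
    hvmeas.comp (measurable_id.prodMk measurable_const)
  have hsecu : ∀ r : ℝ, Measurable fun y => u y r := fun r => (hsecw r).sub (hsecv r)
  have htw : ∀ x : G, Measurable fun r => w x r := fun x =>
    hwmeas.comp (measurable_const.prodMk measurable_id)
  have htv : ∀ x : G, Measurable fun r => v x r := fun x =>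
    hvmeas.comp (measurable_const.prodMk measurable_id)
  have huzero : ∀ x ∉ Ω, ∀ r ∈ Icc (0:ℝ) t₀, u x r = 0 := by
    intro x hx r hr; simp only [hudef]; rw [hwg x hx r hr, hvg x hx r hr, sub_self]
  have huint : ∀ r ∈ Icc (0:ℝ) t₀, IntegrableOn (fun x => u x r) Ω μ :=
    fun r hr => (hwint r hr).sub (hvint r hr)
  have hucont : ∀ s ∈ Icc (0:ℝ) t₀,
      Filter.Tendsto (fun t => ∫ x in Ω, |u x t - u x s| ∂μ)
        (nhdsWithin s (Icc (0:ℝ) t₀)) (nhds 0) := by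
    intro s hs
    have hsum : Filter.Tendsto
        (fun t => (∫ x in Ω, |w x t - w x s| ∂μ) + ∫ x in Ω, |v x t - v x s| ∂μ)
        (nhdsWithin s (Icc (0:ℝ) t₀)) (nhds 0) := by
      simpa using (hwcont s hs).add (hvcont s hs)
    apply squeeze_zero'
      (Filter.Eventually.of_forall fun t => integral_nonneg fun x => abs_nonneg _) ?_ hsum
    filter_upwards [self_mem_nhdsWithin] with t ht
    have hw1 : IntegrableOn (fun x => |w x t - w x s|) Ω μ := ((hwint t ht).sub (hwint s hs)).abs
    have hv1 : IntegrableOn (fun x => |v x t - v x s|) Ω μ := ((hvint t ht).sub (hvint s hs)).abs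
    have hu1 : IntegrableOn (fun x => |u x t - u x s|) Ω μ := by
      simp only [hudef]
      exact (((hwint t ht).sub (hvint t ht)).sub ((hwint s hs).sub (hvint s hs))).abs
    rw [← integral_add hw1 hv1]
    apply integral_mono hu1 (hw1.add hv1)
    intro x
    simp only [hudef]
    have : w x t - v x t - (w x s - v x s) = (w x t - w x s) - (v x t - v x s) := by ring
    rw [this]
    exact abs_sub _ _
  -- bounded norms
  have h0mem : (0:ℝ) ∈ Icc (0:ℝ) t₀ := ⟨le_refl 0, ht₀.le⟩
  haveI : Nonempty (Icc (0:ℝ) t₀) := ⟨⟨0, h0mem⟩⟩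
  have hbw := bddAbove_aux μ Ω t₀ w hwint hwcont
  have hbv := bddAbove_aux μ Ω t₀ v hvint hvcont
  have hbu := bddAbove_aux μ Ω t₀ u huint hucont
  set N : ℝ := tripleNorm μ Ω t₀ u with hNdef
  set Nw : ℝ := tripleNorm μ Ω t₀ w with hNwdef
  set Nv : ℝ := tripleNorm μ Ω t₀ v with hNvdef
  have hNle : ∀ r ∈ Icc (0:ℝ) t₀, ∫ x in Ω, |u x r| ∂μ ≤ N := fun r hr =>
    le_ciSup hbu (⟨r, hr⟩ : Icc (0:ℝ) t₀)
  have hNwle : ∀ r ∈ Icc (0:ℝ) t₀, ∫ x in Ω, |w x r| ∂μ ≤ Nw := fun r hr =>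
    le_ciSup hbw (⟨r, hr⟩ : Icc (0:ℝ) t₀)
  have hNvle : ∀ r ∈ Icc (0:ℝ) t₀, ∫ x in Ω, |v x r| ∂μ ≤ Nv := fun r hr =>
    le_ciSup hbv (⟨r, hr⟩ : Icc (0:ℝ) t₀)
  have hN0 : 0 ≤ N := le_trans (integral_nonneg fun x => abs_nonneg _) (hNle 0 h0mem)
  -- integrability on F'
  have intF : ∀ (f : G → ℝ → ℝ), (∀ r : ℝ, Measurable fun y => f y r) →
      (∀ x ∉ Ω, ∀ r ∈ Icc (0:ℝ) t₀, f x r = g x r) →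
      (∀ r ∈ Icc (0:ℝ) t₀, IntegrableOn (fun x => f x r) Ω μ) →
      ∀ r ∈ Icc (0:ℝ) t₀, IntegrableOn (fun y => f y r) F' μ := by
    intro f hfm hfg hfint r hr
    rw [← Set.inter_union_diff F' Ω]
    apply IntegrableOn.union
    · exact (hfint r hr).mono_set inter_subset_right
    · apply Integrable.mono' (g := fun _ => C)
        (integrableOn_const ((measure_mono diff_subset).trans_lt hF'fin).ne)
        ((hfm r).aestronglyMeasurable.restrict)
      filter_upwards [ae_restrict_mem (hF'm.diff hΩm)] with y hy
      rw [Real.norm_eq_abs, hfg y hy.2 r hr]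
      exact hC y r
  have hwF : ∀ r ∈ Icc (0:ℝ) t₀, IntegrableOn (fun y => w y r) F' μ :=
    intF w hsecw hwg hwint
  have hvF : ∀ r ∈ Icc (0:ℝ) t₀, IntegrableOn (fun y => v y r) F' μ :=
    intF v hsecv hvg hvint
  have huF : ∀ r ∈ Icc (0:ℝ) t₀, IntegrableOn (fun y => u y r) F' μ :=
    fun r hr => (hwF r hr).sub (hvF r hr)
  -- set integral bounds over F'
  have hdisj : Disjoint (F' ∩ Ω) (F' \ Ω) :=
    disjoint_sdiff_self_right.mono_left inter_subset_right
  have hsplit : ∀ (f : G → ℝ → ℝ), (∀ r ∈ Icc (0:ℝ) t₀, IntegrableOn (fun y => f y r) F' μ) →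
      ∀ r ∈ Icc (0:ℝ) t₀, ∫ y in F', |f y r| ∂μ =
        (∫ y in F' ∩ Ω, |f y r| ∂μ) + ∫ y in F' \ Ω, |f y r| ∂μ := by
    intro f hfF r hr
    conv_lhs => rw [← Set.inter_union_diff F' Ω]
    exact setIntegral_union hdisj (hF'm.diff hΩm)
      (((hfF r hr).mono_set inter_subset_left).abs)
      (((hfF r hr).mono_set diff_subset).abs)
  have hsub1 : (F' ∩ Ω : Set G) ≤ᵐ[μ] Ω :=
    HasSubset.Subset.eventuallyLE inter_subset_right
  have hdiffle : ∀ (f : G → ℝ → ℝ), (∀ x ∉ Ω, ∀ r ∈ Icc (0:ℝ) t₀, f x r = g x r) →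
      ∀ r ∈ Icc (0:ℝ) t₀, ∫ y in F' \ Ω, |f y r| ∂μ ≤ C * (μ F').toReal := by
    intro f hfg r hr
    have h1 : ∫ y in F' \ Ω, |f y r| ∂μ ≤ ∫ _y in F' \ Ω, C ∂μ := by
      apply integral_mono_of_nonneg (Filter.Eventually.of_forall fun y => abs_nonneg _)
        (integrableOn_const (C := C) (s := F' \ Ω) (μ := μ)
          ((measure_mono diff_subset).trans_lt hF'fin).ne).integrable
      filter_upwards [ae_restrict_mem (hF'm.diff hΩm)] with y hy
      rw [hfg y hy.2 r hr]
      exact hC y r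
    refine h1.trans ?_
    rw [setIntegral_const, smul_eq_mul, mul_comm]
    exact mul_le_mul_of_nonneg_left
      (ENNReal.toReal_mono hF'fin.ne (measure_mono diff_subset)) hCnn
  have hFw : ∀ r ∈ Icc (0:ℝ) t₀, ∫ y in F', |w y r| ∂μ ≤ Nw + C * (μ F').toReal := by
    intro r hr
    rw [hsplit w hwF r hr]
    refine add_le_add (le_trans ?_ (hNwle r hr)) (hdiffle w hwg r hr)
    exact setIntegral_mono_set (hwint r hr).abs
      (Filter.Eventually.of_forall fun y => abs_nonneg _) hsub1
  have hFv : ∀ r ∈ Icc (0:ℝ) t₀, ∫ y in F', |v y r| ∂μ ≤ Nv + C * (μ F').toReal := by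
    intro r hr
    rw [hsplit v hvF r hr]
    refine add_le_add (le_trans ?_ (hNvle r hr)) (hdiffle v hvg r hr)
    exact setIntegral_mono_set (hvint r hr).abs
      (Filter.Eventually.of_forall fun y => abs_nonneg _) hsub1
  have hFu : ∀ r ∈ Icc (0:ℝ) t₀, ∫ y in F', |u y r| ∂μ ≤ N := by
    intro r hr
    rw [hsplit u huF r hr]
    have hzero : ∫ y in F' \ Ω, |u y r| ∂μ = 0 := by
      rw [setIntegral_congr_fun (hF'm.diff hΩm) (fun y hy => by
        simp only [huzero y hy.2 r hr, abs_zero] : EqOn (fun y => |u y r|) (fun _ => (0:ℝ)) (F' \ Ω))]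
      exact integral_zero _ _
    rw [hzero, add_zero]
    refine le_trans ?_ (hNle r hr)
    exact setIntegral_mono_set (huint r hr).abs
      (Filter.Eventually.of_forall fun y => abs_nonneg _) hsub1
  -- kernel integrability and bound
  have hKsec : ∀ x : G, Measurable fun y => K x y := fun x =>
    hKmeas.comp (measurable_const.prodMk measurable_id)
  have hKzero : ∀ x : G, ∀ y ∉ F', K x y = 0 := fun x y hy =>
    hKsupp x y (by simp [Set.mem_prod, hy])
  have hptbd : ∀ (x : G) (f : G → ℝ) (c : ℝ) (y : G),
      |K x y * (f y - c)| ≤ M * |f y| + M * |c| := by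
    intro x f c y
    rw [abs_mul, abs_of_nonneg (hKnonneg x y)]
    calc K x y * |f y - c| ≤ M * |f y - c| :=
          mul_le_mul_of_nonneg_right (hKle x y) (abs_nonneg _)
      _ ≤ M * (|f y| + |c|) := mul_le_mul_of_nonneg_left (abs_sub _ _) hM.le
      _ = M * |f y| + M * |c| := by ring
  have hdomint : ∀ (f : G → ℝ) (c : ℝ), IntegrableOn f F' μ →
      IntegrableOn (fun y => M * |f y| + M * |c|) F' μ := fun f c hfi =>
    (hfi.abs.const_mul M).add (integrableOn_const hF'fin.ne)
  have kernel_int : ∀ x ∈ Ω, ∀ (f : G → ℝ) (c : ℝ), Measurable f → IntegrableOn f F' μ →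
      Integrable (fun y => K x y * (f y - c)) μ := by
    intro x hx f c hfm hfi
    have heq : (fun y => K x y * (f y - c)) = F'.indicator (fun y => K x y * (f y - c)) := by
      funext y
      by_cases hy : y ∈ F'
      · rw [Set.indicator_of_mem hy]
      · rw [Set.indicator_of_notMem hy, hKzero x y hy, zero_mul]
    rw [heq]
    apply MeasureTheory.IntegrableOn.integrable_indicator _ hF'm
    apply Integrable.mono' (hdomint f c hfi)
      (((hKsec x).mul ((hfm.sub measurable_const))).aestronglyMeasurable.restrict)
    exact Filter.Eventually.of_forall fun y => by
      rw [Real.norm_eq_abs]; exact hptbd x f c y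
  have kernel_bound : ∀ x ∈ Ω, ∀ (f : G → ℝ) (c : ℝ), Measurable f → IntegrableOn f F' μ →
      |∫ y, K x y * (f y - c) ∂μ| ≤ M * ∫ y in F', |f y| ∂μ + M * (μ F').toReal * |c| := by
    intro x hx f c hfm hfi
    have h1 : |∫ y, K x y * (f y - c) ∂μ| ≤ ∫ y, |K x y * (f y - c)| ∂μ := by
      have := norm_integral_le_integral_norm (μ := μ) (f := fun y => K x y * (f y - c))
      simpa only [Real.norm_eq_abs] using this
    refine h1.trans ?_
    have hindint : Integrable (F'.indicator (fun y => M * |f y| + M * |c|)) μ :=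
      MeasureTheory.IntegrableOn.integrable_indicator (hdomint f c hfi) hF'm
    have h2 : ∫ y, |K x y * (f y - c)| ∂μ ≤
        ∫ y, F'.indicator (fun y => M * |f y| + M * |c|) y ∂μ := by
      apply integral_mono_of_nonneg (Filter.Eventually.of_forall fun y => abs_nonneg _)
        hindint
      apply Filter.Eventually.of_forall
      intro y
      by_cases hy : y ∈ F'
      · rw [Set.indicator_of_mem hy]
        exact hptbd x f c y
      · rw [Set.indicator_of_notMem hy]
        simp only [hKzero x y hy, zero_mul, abs_zero, le_refl]
    refine h2.trans ?_
    rw [integral_indicator hF'm,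
      integral_add (hfi.abs.const_mul M) (integrableOn_const hF'fin.ne),
      integral_const_mul, setIntegral_const, smul_eq_mul]
    ring_nf
    simp only [Measure.real]; linarith
  -- finite measures
  haveI hfinΩ : IsFiniteMeasure (μ.restrict Ω) :=
    ⟨by rw [Measure.restrict_apply_univ]; exact hΩfin⟩
  haveI hfinF : IsFiniteMeasure (μ.restrict F') :=
    ⟨by rw [Measure.restrict_apply_univ]; exact hF'fin⟩
  haveI : IsFiniteMeasure (volume.restrict (Ioc (0:ℝ) t₀)) :=
    ⟨by rw [Measure.restrict_apply_univ]; simp [Real.volume_Ioc]⟩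
  -- product integrability
  have Hprod : ∀ (f : G → ℝ → ℝ), Measurable (fun p : G × ℝ => f p.1 p.2) →
      (∀ r ∈ Icc (0:ℝ) t₀, IntegrableOn (fun x => f x r) Ω μ) →
      BddAbove (Set.range fun t : Icc (0:ℝ) t₀ => ∫ x in Ω, |f x (t : ℝ)| ∂μ) →
      Integrable (fun p : G × ℝ => f p.1 p.2)
        ((μ.restrict Ω).prod (volume.restrict (Ioc (0:ℝ) t₀))) := by
    intro f hfm hfint hbdd
    set B : ℝ := ⨆ t : Icc (0:ℝ) t₀, ∫ x in Ω, |f x (t:ℝ)| ∂μ with hB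
    have hBle : ∀ r ∈ Icc (0:ℝ) t₀, ∫ x in Ω, |f x r| ∂μ ≤ B := fun r hr =>
      le_ciSup hbdd (⟨r, hr⟩ : Icc (0:ℝ) t₀)
    refine ⟨hfm.aestronglyMeasurable, ?_⟩
    have hunfold : HasFiniteIntegral (fun p : G × ℝ => f p.1 p.2)
        ((μ.restrict Ω).prod (volume.restrict (Ioc (0:ℝ) t₀))) ↔
        (∫⁻ p, ‖f p.1 p.2‖ₑ
          ∂((μ.restrict Ω).prod (volume.restrict (Ioc (0:ℝ) t₀)))) < ⊤ := Iff.rfl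
    rw [hunfold,
      lintegral_prod_symm' (fun z : G × ℝ => ‖f z.1 z.2‖ₑ)
        hfm.enorm]
    calc (∫⁻ r, ∫⁻ x, ‖f x r‖ₑ ∂(μ.restrict Ω) ∂(volume.restrict (Ioc (0:ℝ) t₀)))
        ≤ ∫⁻ _r, ENNReal.ofReal B ∂(volume.restrict (Ioc (0:ℝ) t₀)) := by
          apply lintegral_mono_ae
          filter_upwards [ae_restrict_mem measurableSet_Ioc] with r hr
          have hr' : r ∈ Icc (0:ℝ) t₀ := ⟨hr.1.le, hr.2⟩
          have heq := ofReal_integral_norm_eq_lintegral_enorm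
            (f := fun x => f x r) (hfint r hr')
          rw [← heq]
          apply ENNReal.ofReal_le_ofReal
          simpa [Real.norm_eq_abs] using hBle r hr'
      _ = ENNReal.ofReal B * (volume.restrict (Ioc (0:ℝ) t₀)) univ := lintegral_const _
      _ < ⊤ := ENNReal.mul_lt_top ENNReal.ofReal_lt_top (measure_lt_top _ _)
  have Hw := Hprod w hwmeas hwint hbw
  have Hv := Hprod v hvmeas hvint hbv
  have Hu : Integrable (fun p : G × ℝ => u p.1 p.2)
      ((μ.restrict Ω).prod (volume.restrict (Ioc (0:ℝ) t₀))) := Hw.sub Hv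
  -- a.e. section integrability
  have haew : ∀ᵐ x ∂(μ.restrict Ω), IntegrableOn (fun r => w x r) (Ioc (0:ℝ) t₀) volume :=
    Hw.prod_right_ae
  have haev : ∀ᵐ x ∂(μ.restrict Ω), IntegrableOn (fun r => v x r) (Ioc (0:ℝ) t₀) volume :=
    Hv.prod_right_ae
  -- the integral of φ
  have hφint : IntegrableOn (fun x => ∫ r in Ioc (0:ℝ) t₀, |u x r|) Ω μ := by
    have := Hu.integral_norm_prod_left
    simpa only [Real.norm_eq_abs, IntegrableOn] using this
  have hφle : ∫ x in Ω, (∫ r in Ioc (0:ℝ) t₀, |u x r|) ∂μ ≤ t₀ * N := by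
    have hswap := integral_integral_swap (f := fun x r => |u x r|)
      (μ := μ.restrict Ω) (ν := volume.restrict (Ioc (0:ℝ) t₀)) Hu.abs
    rw [hswap]
    calc (∫ r in Ioc (0:ℝ) t₀, ∫ x in Ω, |u x r| ∂μ)
        ≤ ∫ _r in Ioc (0:ℝ) t₀, N := by
          apply integral_mono_of_nonneg
            (Filter.Eventually.of_forall fun r => integral_nonneg fun x => abs_nonneg _)
            (integrableOn_const (C := N) (s := Ioc (0:ℝ) t₀) (μ := volume)
              (by simp [Real.volume_Ioc])).integrable
          filter_upwards [ae_restrict_mem measurableSet_Ioc] with r hr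
          exact hNle r ⟨hr.1.le, hr.2⟩
      _ = t₀ * N := by
          rw [setIntegral_const, measureReal_def, Real.volume_Ioc, smul_eq_mul]
          rw [ENNReal.toReal_ofReal (by linarith : (0:ℝ) ≤ t₀ - 0)]
          ring
  -- the per-t bound
  rw [tripleNorm]
  apply ciSup_le
  rintro ⟨t, ht⟩
  simp only
  have key : ∫ x in Ω, |nonlocalT μ Ω K g w x t - nonlocalT μ Ω K g v x t| ∂μ ≤
      ∫ x in Ω, (|u x 0| + M * N * t₀ + M * (μ F').toReal * ∫ r in Ioc (0:ℝ) t₀, |u x r|) ∂μ := by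
    have hbint : IntegrableOn
        (fun x => |u x 0| + M * N * t₀ + M * (μ F').toReal *
          ∫ r in Ioc (0:ℝ) t₀, |u x r|) Ω μ := by
      exact (((huint 0 h0mem).abs).add (integrableOn_const hΩfin.ne)).add
        (hφint.const_mul _)
    apply integral_mono_of_nonneg
      (Filter.Eventually.of_forall fun x => abs_nonneg _) hbint
    filter_upwards [ae_restrict_mem hΩm, haew, haev] with x hx hxw hxv
    have hxu : IntegrableOn (fun r => u x r) (Ioc (0:ℝ) t₀) volume := by
      exact hxw.sub hxv
    set Jw : ℝ → ℝ := fun r => ∫ y, K x y * (w y r - w x r) ∂μ with hJw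
    set Jv : ℝ → ℝ := fun r => ∫ y, K x y * (v y r - v x r) ∂μ with hJv
    set J : ℝ → ℝ := fun r => ∫ y, K x y * (u y r - u x r) ∂μ with hJ
    have hJeq : ∀ r ∈ Icc (0:ℝ) t₀, Jw r = Jv r + J r := by
      intro r hr
      have hsub : J r = Jw r - Jv r := by
        rw [hJw, hJv, hJ]
        simp only
        rw [← integral_sub (kernel_int x hx (fun y => w y r) (w x r) (hsecw r) (hwF r hr))
          (kernel_int x hx (fun y => v y r) (v x r) (hsecv r) (hvF r hr))]
        apply integral_congr_ae
        apply Filter.Eventually.of_forall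
        intro y
        simp only [hudef]
        ring
      rw [hsub]; ring
    -- strong measurability of the three integral functions
    have measJ : ∀ (f : G → ℝ → ℝ), Measurable (fun p : G × ℝ => f p.1 p.2) →
        StronglyMeasurable fun r => ∫ y, K x y * (f y r - f x r) ∂μ := by
      intro f hfm
      have hrw : (fun r => ∫ y, K x y * (f y r - f x r) ∂μ) =
          fun r => ∫ y, K x y * (f y r - f x r) ∂(μ.restrict F') := by
        funext r
        exact (setIntegral_eq_integral_of_forall_compl_eq_zero
          (fun y hy => by rw [hKzero x y hy, zero_mul])).symm
      rw [hrw]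
      apply StronglyMeasurable.integral_prod_right
        (f := fun (r : ℝ) (y : G) => K x y * (f y r - f x r))
      apply Measurable.stronglyMeasurable
      exact (((hKsec x).comp measurable_snd).mul
        (((hfm.comp (measurable_snd.prodMk measurable_fst))).sub
          ((hfm.comp (measurable_const.prodMk measurable_fst)))))
    -- interval integrability
    have hIocsub : Ioc (0:ℝ) t ⊆ Ioc (0:ℝ) t₀ := Ioc_subset_Ioc_right ht.2
    have hII : ∀ (f : G → ℝ → ℝ), Measurable (fun p : G × ℝ => f p.1 p.2) →
        (∀ r ∈ Icc (0:ℝ) t₀, IntegrableOn (fun y => f y r) F' μ) →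
        (∀ r ∈ Icc (0:ℝ) t₀, ∫ y in F', |f y r| ∂μ ≤ Nw + Nv + C * (μ F').toReal + N) →
        IntegrableOn (fun r => f x r) (Ioc (0:ℝ) t₀) volume →
        IntervalIntegrable (fun r => ∫ y, K x y * (f y r - f x r) ∂μ) volume 0 t := by
      intro f hfm hfF hfb hfx
      rw [intervalIntegrable_iff_integrableOn_Ioc_of_le ht.1]
      apply Integrable.mono'
        (g := fun r => M * (Nw + Nv + C * (μ F').toReal + N) + M * (μ F').toReal * |f x r|)
      · exact (integrableOn_const (by simp [Real.volume_Ioc])).add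
          (((hfx.mono_set hIocsub).abs).const_mul _)
      · exact ((measJ f hfm).measurable.aestronglyMeasurable).restrict
      · filter_upwards [ae_restrict_mem measurableSet_Ioc] with r hr
        have hr' : r ∈ Icc (0:ℝ) t₀ := ⟨hr.1.le, (hr.2.trans ht.2)⟩
        rw [Real.norm_eq_abs]
        have hb := kernel_bound x hx (fun y => f y r) (f x r) (by
          exact hfm.comp (measurable_id.prodMk measurable_const)) (hfF r hr')
        refine hb.trans ?_
        have := hfb r hr'
        have h2 : M * ∫ y in F', |f y r| ∂μ ≤ M * (Nw + Nv + C * (μ F').toReal + N) :=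
          mul_le_mul_of_nonneg_left this hM.le
        linarith
    have hNwb : ∀ r ∈ Icc (0:ℝ) t₀, ∫ y in F', |w y r| ∂μ ≤
        Nw + Nv + C * (μ F').toReal + N := by
      intro r hr
      have h0N : 0 ≤ Nv := le_trans (integral_nonneg fun x => abs_nonneg _) (hNvle 0 h0mem)
      have := hFw r hr
      linarith
    have hNvb : ∀ r ∈ Icc (0:ℝ) t₀, ∫ y in F', |v y r| ∂μ ≤
        Nw + Nv + C * (μ F').toReal + N := by
      intro r hr
      have h0N : 0 ≤ Nw := le_trans (integral_nonneg fun x => abs_nonneg _) (hNwle 0 h0mem)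
      have := hFv r hr
      linarith
    have hNub : ∀ r ∈ Icc (0:ℝ) t₀, ∫ y in F', |u y r| ∂μ ≤
        Nw + Nv + C * (μ F').toReal + N := by
      intro r hr
      have h0Nw : 0 ≤ Nw := le_trans (integral_nonneg fun x => abs_nonneg _) (hNwle 0 h0mem)
      have h0Nv : 0 ≤ Nv := le_trans (integral_nonneg fun x => abs_nonneg _) (hNvle 0 h0mem)
      have hCF : 0 ≤ C * (μ F').toReal := mul_nonneg hCnn ENNReal.toReal_nonneg
      have := hFu r hr
      linarith
    have hJvII : IntervalIntegrable Jv volume 0 t := hII v hvmeas hvF hNvb hxv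
    have hJII : IntervalIntegrable J volume 0 t := hII u humeas huF hNub hxu
    -- the dominating function for J
    have hdomII : IntervalIntegrable
        (fun r => M * N + M * (μ F').toReal * |u x r|) volume 0 t := by
      rw [intervalIntegrable_iff_integrableOn_Ioc_of_le ht.1]
      exact (integrableOn_const (by simp [Real.volume_Ioc])).add
        (((hxu.mono_set hIocsub).abs).const_mul _)
    have hJbound : ∀ r ∈ Icc (0:ℝ) t, |J r| ≤ M * N + M * (μ F').toReal * |u x r| := by
      intro r hr
      have hr' : r ∈ Icc (0:ℝ) t₀ := ⟨hr.1, hr.2.trans ht.2⟩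
      have hb := kernel_bound x hx (fun y => u y r) (u x r) (hsecu r) (huF r hr')
      refine hb.trans ?_
      have h2 : M * ∫ y in F', |u y r| ∂μ ≤ M * N :=
        mul_le_mul_of_nonneg_left (hFu r hr') hM.le
      linarith
    -- main chain
    simp only [nonlocalT, if_pos hx]
    have hcongr : (∫ r in (0:ℝ)..t, Jw r) = ∫ r in (0:ℝ)..t, (Jv r + J r) :=
      intervalIntegral.integral_congr (fun r hr => hJeq r (by
        rw [uIcc_of_le ht.1] at hr
        exact ⟨hr.1, hr.2.trans ht.2⟩))
    have hadd : (∫ r in (0:ℝ)..t, (Jv r + J r)) =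
        (∫ r in (0:ℝ)..t, Jv r) + ∫ r in (0:ℝ)..t, J r :=
      intervalIntegral.integral_add hJvII hJII
    have hrw2 : w x 0 + (∫ r in (0:ℝ)..t, Jw r) - (v x 0 + ∫ r in (0:ℝ)..t, Jv r) =
        u x 0 + ∫ r in (0:ℝ)..t, J r := by
      rw [hcongr, hadd]
      simp only [hudef]
      ring
    rw [hrw2]
    refine (abs_add_le _ _).trans ?_
    have habs : |∫ r in (0:ℝ)..t, J r| ≤ ∫ r in (0:ℝ)..t, |J r| :=
      intervalIntegral.abs_integral_le_integral_abs ht.1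
    have hmono : (∫ r in (0:ℝ)..t, |J r|) ≤
        ∫ r in (0:ℝ)..t, (M * N + M * (μ F').toReal * |u x r|) :=
      intervalIntegral.integral_mono_on ht.1 hJII.abs hdomII hJbound
    have hcomp : (∫ r in (0:ℝ)..t, (M * N + M * (μ F').toReal * |u x r|)) =
        M * N * t + M * (μ F').toReal * ∫ r in (0:ℝ)..t, |u x r| := by
      rw [intervalIntegral.integral_add (intervalIntegrable_const)
        (by
          rw [intervalIntegrable_iff_integrableOn_Ioc_of_le ht.1]
          exact ((hxu.mono_set hIocsub).abs).const_mul _),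
        intervalIntegral.integral_const, intervalIntegral.integral_const_mul]
      simp [smul_eq_mul]
      ring
    have hlast : (∫ r in (0:ℝ)..t, |u x r|) ≤ ∫ r in Ioc (0:ℝ) t₀, |u x r| := by
      rw [intervalIntegral.integral_of_le ht.1]
      exact setIntegral_mono_set (hxu.abs)
        (Filter.Eventually.of_forall fun r => abs_nonneg _)
        (HasSubset.Subset.eventuallyLE hIocsub)
    have hMN : M * N * t ≤ M * N * t₀ :=
      mul_le_mul_of_nonneg_left ht.2 (by positivity)
    have hMF : M * (μ F').toReal * (∫ r in (0:ℝ)..t, |u x r|) ≤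
        M * (μ F').toReal * ∫ r in Ioc (0:ℝ) t₀, |u x r| :=
      mul_le_mul_of_nonneg_left hlast (by positivity)
    have := habs.trans (hmono.trans_eq hcomp)
    linarith
  refine key.trans ?_
  have e1 : ∫ x in Ω, (|u x 0| + M * N * t₀ + M * (μ F').toReal *
        ∫ r in Ioc (0:ℝ) t₀, |u x r|) ∂μ
      = (∫ x in Ω, |u x 0| ∂μ) + (M * N * t₀) * (μ Ω).toReal
        + M * (μ F').toReal * ∫ x in Ω, (∫ r in Ioc (0:ℝ) t₀, |u x r|) ∂μ := by
    have i1 : IntegrableOn (fun x => |u x 0| + M * N * t₀) Ω μ := by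
      exact ((huint 0 h0mem).abs).add (integrableOn_const hΩfin.ne)
    have i2 : IntegrableOn (fun x => M * (μ F').toReal *
        ∫ r in Ioc (0:ℝ) t₀, |u x r|) Ω μ := by
      exact hφint.const_mul _
    have i3 : IntegrableOn (fun x => |u x 0|) Ω μ := (huint 0 h0mem).abs
    have i4 : IntegrableOn (fun _x : G => M * N * t₀) Ω μ :=
      integrableOn_const hΩfin.ne
    rw [integral_add i1 i2, integral_add i3 i4,
      setIntegral_const, measureReal_def, smul_eq_mul, integral_const_mul, mul_comm ((μ Ω).toReal)]
  rw [e1]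
  have h2 : M * (μ F').toReal * ∫ x in Ω, (∫ r in Ioc (0:ℝ) t₀, |u x r|) ∂μ ≤
      M * (μ F').toReal * (t₀ * N) := by
    apply mul_le_mul_of_nonneg_left hφle
    positivity
  have heq : M * N * t₀ * (μ Ω).toReal + M * (μ F').toReal * (t₀ * N) =
      M * ((μ Ω).toReal + (μ F').toReal) * t₀ * N := by ring
  have hu0 : ∫ x in Ω, |u x 0| ∂μ = ∫ x in Ω, |w x 0 - v x 0| ∂μ := rfl
  rw [← hu0]
  linarith
end

section
/- Let u₀ ∈ L¹(Ω) and let X_{t₀,u₀} = {w ∈ X_{t₀} : w(·,0)|_Ω = u₀}. If t₀ > 0 satisfies M(μ(Ω) + μ(F′)) · t₀ < 1, then 𝔗 maps X_{t₀,u₀} into X_{t₀,u₀} and is a strict contraction on X_{t₀,u₀} (with contraction constant M(μ(Ω) + μ(F′)) t₀ < 1 for the norm |||·|||); consequently 𝔗 has a unique fixed point in X_{t₀,u₀}. -/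
open MeasureTheory Set

attribute [local instance] Classical.propDecidable

/-- Membership in `X_{t₀,u₀} = {w ∈ X_{t₀} : w(·,0)|_Ω = u₀}` (equality in `L¹(Ω)`). -/
def MemX0 {G : Type*} [MeasurableSpace G] (μ : Measure G) (Ω : Set G)
    (g : G → ℝ → ℝ) (t₀ : ℝ) (u₀ : G → ℝ) (w : G → ℝ → ℝ) : Prop :=
  MemX μ Ω g t₀ w ∧ (fun x => w x 0) =ᵐ[μ.restrict Ω] u₀

open Filter

noncomputable def flux {G : Type*} [MeasurableSpace G] (μ : Measure G) (K : G → G → ℝ)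
    (w : G → ℝ → ℝ) (x : G) (r : ℝ) : ℝ :=
  ∫ y, K x y * (w y r - w x r) ∂μ

structure NLS {G : Type*} [MeasurableSpace G] (μ : Measure G) (Ω F' : Set G)
    (K : G → G → ℝ) (M : ℝ) (t₀ : ℝ) : Prop where
  hΩm : MeasurableSet Ω
  hF'm : MeasurableSet F'
  hΩfin : μ Ω < ⊤
  hF'fin : μ F' < ⊤
  hKmeas : Measurable (fun p : G × G => K p.1 p.2)
  hKnonneg : ∀ x y, 0 ≤ K x y
  hKsupp : ∀ x y, (x, y) ∉ Ω ×ˢ F' → K x y = 0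
  hM : 0 < M
  hKle : ∀ x y, K x y ≤ M
  ht₀ : 0 < t₀

/-- package of properties of a function in (a translate of) the space `X`. -/
structure Pk {G : Type*} [MeasurableSpace G] (μ : Measure G) (Ω : Set G) (t₀ : ℝ)
    (w : G → ℝ → ℝ) (C S : ℝ) : Prop where
  meas : Measurable (fun p : G × ℝ => w p.1 p.2)
  bddOff : ∀ x ∉ Ω, ∀ t ∈ Icc (0:ℝ) t₀, |w x t| ≤ C
  intOn : ∀ t ∈ Icc (0:ℝ) t₀, IntegrableOn (fun x => w x t) Ω μ
  bndInt : ∀ t ∈ Icc (0:ℝ) t₀, ∫ x in Ω, |w x t| ∂μ ≤ S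
  hC : 0 ≤ C
  hS : 0 ≤ S

section Core

variable {G : Type*} [MeasurableSpace G] {μ : Measure G} {Ω F' : Set G}
  {K : G → G → ℝ} {M : ℝ} {t₀ : ℝ} {g : G → ℝ → ℝ} {w : G → ℝ → ℝ} {C S : ℝ}

theorem NLS.finΩ (H : NLS μ Ω F' K M t₀) : IsFiniteMeasure (μ.restrict Ω) :=
  ⟨by rw [Measure.restrict_apply_univ]; exact H.hΩfin⟩

theorem NLS.finF' (H : NLS μ Ω F' K M t₀) : IsFiniteMeasure (μ.restrict F') :=
  ⟨by rw [Measure.restrict_apply_univ]; exact H.hF'fin⟩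

theorem NLS.flux_eq (H : NLS μ Ω F' K M t₀) (w : G → ℝ → ℝ) (x : G) (r : ℝ) :
    flux μ K w x r = ∫ y in F', K x y * (w y r - w x r) ∂μ := by
  rw [flux, ← integral_indicator H.hF'm]
  congr 1
  ext y
  by_cases hy : y ∈ F'
  · simp [hy]
  · simp only [indicator_of_notMem hy]
    have : K x y = 0 := H.hKsupp x y (by simp [hy])
    simp [this]

theorem abs_int_le {α : Type*} [MeasurableSpace α] {ν : Measure α} (f : α → ℝ) :
    |∫ x, f x ∂ν| ≤ ∫ x, |f x| ∂ν := by
  simpa [Real.norm_eq_abs] using norm_integral_le_integral_norm (μ := ν) f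

theorem Pk.meas_sect (hP : Pk μ Ω t₀ w C S) (r : ℝ) : Measurable (fun y => w y r) :=
  hP.meas.comp (measurable_id.prodMk measurable_const)

/-- `|w · r|` is integrable on `F'` (boundary part bounded, interior part L¹). -/
theorem Pk.intOnF' (H : NLS μ Ω F' K M t₀) (hP : Pk μ Ω t₀ w C S)
    {r : ℝ} (hr : r ∈ Icc (0:ℝ) t₀) : IntegrableOn (fun y => w y r) F' μ := by
  have h1 : IntegrableOn (fun y => w y r) (F' ∩ Ω) μ :=
    (hP.intOn r hr).mono_set inter_subset_right
  have h2 : IntegrableOn (fun y => w y r) (F' \ Ω) μ := by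
    apply Measure.integrableOn_of_bounded (M := C)
      ((measure_mono diff_subset).trans_lt H.hF'fin).ne
      (hP.meas_sect r).aestronglyMeasurable
    filter_upwards [ae_restrict_mem (H.hF'm.diff H.hΩm)] with y hy
    exact hP.bddOff y hy.2 r hr
  have := h1.union h2
  apply this.mono_set
  intro y hy
  by_cases hyΩ : y ∈ Ω
  · exact Or.inl ⟨hy, hyΩ⟩
  · exact Or.inr ⟨hy, hyΩ⟩

theorem NLS.integrable_integrand (H : NLS μ Ω F' K M t₀) (hP : Pk μ Ω t₀ w C S)
    {x : G} (hx : x ∈ Ω) {r : ℝ} (hr : r ∈ Icc (0:ℝ) t₀) :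
    Integrable (fun y => K x y * (w y r - w x r)) μ := by
  have hind : (fun y => K x y * (w y r - w x r)) =
      F'.indicator (fun y => K x y * (w y r - w x r)) := by
    ext y
    by_cases hy : y ∈ F'
    · simp [hy]
    · have : K x y = 0 := H.hKsupp x y (by simp [hy])
      simp [hy, this]
  rw [hind, integrable_indicator_iff H.hF'm]
  have hbl : IntegrableOn (fun y => M * (|w y r| + |w x r|)) F' μ := by
    apply Integrable.const_mul
    exact ((hP.intOnF' H hr).abs.add (integrableOn_const H.hF'fin.ne))
  apply Integrable.mono' hbl
  · exact ((H.hKmeas.comp (measurable_const.prodMk measurable_id)).mul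
      ((hP.meas_sect r).sub measurable_const)).aestronglyMeasurable
  · filter_upwards with y
    have h1 : |K x y * (w y r - w x r)| ≤ M * |w y r - w x r| := by
      rw [abs_mul]
      apply mul_le_mul_of_nonneg_right _ (abs_nonneg _)
      rw [abs_of_nonneg (H.hKnonneg x y)]; exact H.hKle x y
    calc ‖K x y * (w y r - w x r)‖ ≤ M * |w y r - w x r| := h1
    _ ≤ M * (|w y r| + |w x r|) :=
      mul_le_mul_of_nonneg_left (abs_sub _ _) H.hM.le

theorem Pk.setIntegralF'_le (H : NLS μ Ω F' K M t₀) (hP : Pk μ Ω t₀ w C S)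
    {r : ℝ} (hr : r ∈ Icc (0:ℝ) t₀) :
    ∫ y in F', |w y r| ∂μ ≤ S + C * (μ F').toReal := by
  have hsplit : F' = (F' ∩ Ω) ∪ (F' \ Ω) := by
    ext y; by_cases hy : y ∈ Ω <;> simp [hy]
  have hint1 : IntegrableOn (fun y => |w y r|) (F' ∩ Ω) μ :=
    ((hP.intOn r hr).mono_set inter_subset_right).abs
  have hint2 : IntegrableOn (fun y => |w y r|) (F' \ Ω) μ :=
    ((hP.intOnF' H hr).mono_set diff_subset).abs
  have hd : Disjoint (F' ∩ Ω) (F' \ Ω) :=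
    Disjoint.mono inter_subset_right le_rfl disjoint_sdiff_self_right
  calc ∫ y in F', |w y r| ∂μ
      = (∫ y in F' ∩ Ω, |w y r| ∂μ) + ∫ y in F' \ Ω, |w y r| ∂μ := by
        rw [← setIntegral_union hd (H.hF'm.diff H.hΩm) hint1 hint2, ← hsplit]
    _ ≤ S + C * (μ F').toReal := by
        gcongr
        · calc ∫ y in F' ∩ Ω, |w y r| ∂μ ≤ ∫ y in Ω, |w y r| ∂μ := by
                apply setIntegral_mono_set (hP.intOn r hr).abs
                · filter_upwards with y using abs_nonneg _
                · exact HasSubset.Subset.eventuallyLE inter_subset_right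
          _ ≤ S := hP.bndInt r hr
        · calc ∫ y in F' \ Ω, |w y r| ∂μ ≤ ∫ _ in F' \ Ω, C ∂μ := by
                apply setIntegral_mono_on hint2 (integrableOn_const
                  ((measure_mono diff_subset).trans_lt H.hF'fin).ne) (H.hF'm.diff H.hΩm)
                intro y hy
                exact hP.bddOff y hy.2 r hr
          _ = (μ (F' \ Ω)).toReal * C := by rw [setIntegral_const, smul_eq_mul, measureReal_def]
          _ ≤ C * (μ F').toReal := by
                rw [mul_comm]
                apply mul_le_mul_of_nonneg_left _ hP.hC
                exact ENNReal.toReal_mono H.hF'fin.ne (measure_mono diff_subset)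


theorem NLS.abs_flux_le (H : NLS μ Ω F' K M t₀) (hP : Pk μ Ω t₀ w C S)
    {x : G} (hx : x ∈ Ω) {r : ℝ} (hr : r ∈ Icc (0:ℝ) t₀) :
    |flux μ K w x r| ≤ M * ((S + C * (μ F').toReal) + (μ F').toReal * |w x r|) := by
  have hint : IntegrableOn (fun y => K x y * (w y r - w x r)) F' μ :=
    (H.integrable_integrand hP hx hr).integrableOn
  have hbl : IntegrableOn (fun y => M * (|w y r| + |w x r|)) F' μ :=
    (((hP.intOnF' H hr).abs.add (integrableOn_const H.hF'fin.ne))).const_mul M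
  rw [H.flux_eq]
  calc |∫ y in F', K x y * (w y r - w x r) ∂μ|
      ≤ ∫ y in F', |K x y * (w y r - w x r)| ∂μ := abs_int_le _
    _ ≤ ∫ y in F', M * (|w y r| + |w x r|) ∂μ := by
        apply integral_mono hint.abs hbl
        intro y
        show |K x y * (w y r - w x r)| ≤ M * (|w y r| + |w x r|)
        rw [abs_mul]
        calc |K x y| * |w y r - w x r| ≤ M * |w y r - w x r| := by
              apply mul_le_mul_of_nonneg_right _ (abs_nonneg _)
              rw [abs_of_nonneg (H.hKnonneg x y)]; exact H.hKle x y
          _ ≤ M * (|w y r| + |w x r|) :=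
              mul_le_mul_of_nonneg_left (abs_sub _ _) H.hM.le
    _ = M * ((∫ y in F', |w y r| ∂μ) + (μ F').toReal * |w x r|) := by
        rw [integral_const_mul]
        congr 1
        rw [integral_add (hP.intOnF' H hr).abs (integrableOn_const H.hF'fin.ne),
          setIntegral_const, smul_eq_mul, measureReal_def]
    _ ≤ M * ((S + C * (μ F').toReal) + (μ F').toReal * |w x r|) := by
        apply mul_le_mul_of_nonneg_left _ H.hM.le
        apply add_le_add_left (hP.setIntegralF'_le H hr)

theorem NLS.flux_stronglyMeasurable (H : NLS μ Ω F' K M t₀)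
    (hw : Measurable (fun p : G × ℝ => w p.1 p.2)) :
    StronglyMeasurable (fun p : G × ℝ => flux μ K w p.1 p.2) := by
  haveI := H.finF'
  have heq : (fun p : G × ℝ => flux μ K w p.1 p.2) =
      fun p : G × ℝ => ∫ y, K p.1 y * (w y p.2 - w p.1 p.2) ∂(μ.restrict F') := by
    ext p; exact H.flux_eq w p.1 p.2
  rw [heq]
  apply MeasureTheory.StronglyMeasurable.integral_prod_right'
    (f := fun q : (G × ℝ) × G => K q.1.1 q.2 * (w q.2 q.1.2 - w q.1.1 q.1.2))
  apply Measurable.stronglyMeasurable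
  have h1 : Measurable (fun q : (G × ℝ) × G => K q.1.1 q.2) :=
    H.hKmeas.comp (measurable_fst.fst.prodMk measurable_snd)
  have h2 : Measurable (fun q : (G × ℝ) × G => w q.2 q.1.2) :=
    hw.comp (measurable_snd.prodMk measurable_fst.snd)
  have h3 : Measurable (fun q : (G × ℝ) × G => w q.1.1 q.1.2) :=
    hw.comp (measurable_fst.fst.prodMk measurable_fst.snd)
  exact h1.mul (h2.sub h3)

theorem NLS.flux_meas_sect (H : NLS μ Ω F' K M t₀)
    (hw : Measurable (fun p : G × ℝ => w p.1 p.2)) (x : G) :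
    Measurable (fun r => flux μ K w x r) :=
  (H.flux_stronglyMeasurable hw).measurable.comp (measurable_const.prodMk measurable_id)

/-- continuity of `t ↦ ∫_Ω |w t - v t|` on `[0,t₀]`. -/
theorem contAbsSub {v : G → ℝ → ℝ}
    (hw1 : ∀ t ∈ Icc (0:ℝ) t₀, IntegrableOn (fun x => w x t) Ω μ)
    (hw4 : ∀ s ∈ Icc (0:ℝ) t₀,
      Tendsto (fun t => ∫ x in Ω, |w x t - w x s| ∂μ) (nhdsWithin s (Icc (0:ℝ) t₀)) (nhds 0))
    (hv1 : ∀ t ∈ Icc (0:ℝ) t₀, IntegrableOn (fun x => v x t) Ω μ)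
    (hv4 : ∀ s ∈ Icc (0:ℝ) t₀,
      Tendsto (fun t => ∫ x in Ω, |v x t - v x s| ∂μ) (nhdsWithin s (Icc (0:ℝ) t₀)) (nhds 0)) :
    ContinuousOn (fun t => ∫ x in Ω, |w x t - v x t| ∂μ) (Icc (0:ℝ) t₀) := by
  intro s hs
  set φ : ℝ → ℝ := fun t => ∫ x in Ω, |w x t - v x t| ∂μ with hφ
  have key : ∀ t ∈ Icc (0:ℝ) t₀, |φ t - φ s| ≤
      (∫ x in Ω, |w x t - w x s| ∂μ) + ∫ x in Ω, |v x t - v x s| ∂μ := by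
    intro t ht
    have hint1 : IntegrableOn (fun x => |w x t - v x t|) Ω μ :=
      ((hw1 t ht).sub (hv1 t ht)).abs
    have hint2 : IntegrableOn (fun x => |w x s - v x s|) Ω μ :=
      ((hw1 s hs).sub (hv1 s hs)).abs
    have hbnd : IntegrableOn (fun x => |w x t - w x s| + |v x t - v x s|) Ω μ :=
      ((hw1 t ht).sub (hw1 s hs)).abs.add ((hv1 t ht).sub (hv1 s hs)).abs
    rw [hφ, ← integral_sub hint1 hint2]
    refine le_trans (abs_int_le _) (le_trans
      (integral_mono (hint1.sub hint2).abs hbnd ?_)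
      (le_of_eq (integral_add ((hw1 t ht).sub (hw1 s hs)).abs
        ((hv1 t ht).sub (hv1 s hs)).abs)))
    intro x
    have h1 := abs_abs_sub_abs_le_abs_sub (w x t - v x t) (w x s - v x s)
    have he : (w x t - v x t) - (w x s - v x s) = (w x t - w x s) - (v x t - v x s) := by ring
    have h2 : |(w x t - w x s) - (v x t - v x s)| ≤ |w x t - w x s| + |v x t - v x s| :=
      abs_sub _ _
    rw [he] at h1
    exact le_trans h1 h2
  have hψ : Tendsto (fun t => (∫ x in Ω, |w x t - w x s| ∂μ) + ∫ x in Ω, |v x t - v x s| ∂μ)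
      (nhdsWithin s (Icc (0:ℝ) t₀)) (nhds 0) := by
    simpa using (hw4 s hs).add (hv4 s hs)
  have hto : Tendsto (fun t => φ t - φ s) (nhdsWithin s (Icc (0:ℝ) t₀)) (nhds 0) := by
    apply squeeze_zero_norm' _ hψ
    filter_upwards [self_mem_nhdsWithin] with t ht
    simpa [Real.norm_eq_abs] using key t ht
  have := hto.add_const (φ s)
  simpa [ContinuousWithinAt] using this

theorem range_eq_image {α : Type*} (f : ℝ → α) (a b : ℝ) :
    (range fun t : Icc a b => f (t : ℝ)) = f '' Icc a b := by
  ext y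
  constructor
  · rintro ⟨⟨t, ht⟩, rfl⟩; exact ⟨t, ht, rfl⟩
  · rintro ⟨t, ht, rfl⟩; exact ⟨⟨t, ht⟩, rfl⟩

theorem le_tripleNorm'
    (hb : BddAbove ((fun t => ∫ x in Ω, |w x t| ∂μ) '' Icc 0 t₀)) {t : ℝ}
    (ht : t ∈ Icc (0:ℝ) t₀) :
    (∫ x in Ω, |w x t| ∂μ) ≤ tripleNorm μ Ω t₀ w := by
  have hb' : BddAbove (range fun t : Icc (0:ℝ) t₀ => ∫ x in Ω, |w x (t : ℝ)| ∂μ) := by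
    rw [range_eq_image (fun t => ∫ x in Ω, |w x t| ∂μ) 0 t₀]; exact hb
  exact le_ciSup hb' ⟨t, ht⟩

theorem tripleNorm_le' (ht₀ : 0 ≤ t₀) {S : ℝ}
    (h : ∀ t ∈ Icc (0:ℝ) t₀, ∫ x in Ω, |w x t| ∂μ ≤ S) :
    tripleNorm μ Ω t₀ w ≤ S := by
  haveI : Nonempty (Icc (0:ℝ) t₀) := ⟨⟨0, left_mem_Icc.2 ht₀⟩⟩
  exact ciSup_le fun t => h t t.2

theorem bddAbove_sub {v : G → ℝ → ℝ}
    (hw1 : ∀ t ∈ Icc (0:ℝ) t₀, IntegrableOn (fun x => w x t) Ω μ)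
    (hw4 : ∀ s ∈ Icc (0:ℝ) t₀,
      Tendsto (fun t => ∫ x in Ω, |w x t - w x s| ∂μ) (nhdsWithin s (Icc (0:ℝ) t₀)) (nhds 0))
    (hv1 : ∀ t ∈ Icc (0:ℝ) t₀, IntegrableOn (fun x => v x t) Ω μ)
    (hv4 : ∀ s ∈ Icc (0:ℝ) t₀,
      Tendsto (fun t => ∫ x in Ω, |v x t - v x s| ∂μ) (nhdsWithin s (Icc (0:ℝ) t₀)) (nhds 0)) :
    BddAbove ((fun t => ∫ x in Ω, |w x t - v x t| ∂μ) '' Icc (0:ℝ) t₀) :=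
  isCompact_Icc.bddAbove_image (contAbsSub hw1 hw4 hv1 hv4)

theorem zero_cond1 : ∀ t ∈ Icc (0:ℝ) t₀,
    IntegrableOn (fun x => (fun (_ : G) (_ : ℝ) => (0:ℝ)) x t) Ω μ :=
  fun _ _ => by simp [IntegrableOn]

theorem zero_cond4 : ∀ s ∈ Icc (0:ℝ) t₀,
    Tendsto (fun t => ∫ x in Ω, |(0:ℝ) - 0| ∂μ) (nhdsWithin s (Icc (0:ℝ) t₀)) (nhds 0) := by
  intro s _; simpa using tendsto_const_nhds

theorem bddAbove_abs
    (hw1 : ∀ t ∈ Icc (0:ℝ) t₀, IntegrableOn (fun x => w x t) Ω μ)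
    (hw4 : ∀ s ∈ Icc (0:ℝ) t₀,
      Tendsto (fun t => ∫ x in Ω, |w x t - w x s| ∂μ) (nhdsWithin s (Icc (0:ℝ) t₀)) (nhds 0)) :
    BddAbove ((fun t => ∫ x in Ω, |w x t| ∂μ) '' Icc (0:ℝ) t₀) := by
  have := bddAbove_sub (v := fun _ _ => (0:ℝ)) hw1 hw4 zero_cond1 zero_cond4
  simpa using this

theorem exists_S
    (hw1 : ∀ t ∈ Icc (0:ℝ) t₀, IntegrableOn (fun x => w x t) Ω μ)
    (hw4 : ∀ s ∈ Icc (0:ℝ) t₀,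
      Tendsto (fun t => ∫ x in Ω, |w x t - w x s| ∂μ) (nhdsWithin s (Icc (0:ℝ) t₀)) (nhds 0)) :
    ∃ S, 0 ≤ S ∧ ∀ t ∈ Icc (0:ℝ) t₀, ∫ x in Ω, |w x t| ∂μ ≤ S := by
  obtain ⟨S0, hS0⟩ := bddAbove_abs hw1 hw4
  refine ⟨max S0 0, le_max_right _ _, fun t ht => le_trans ?_ (le_max_left _ _)⟩
  exact hS0 (mem_image_of_mem _ ht)

theorem Pk.meas_time (hP : Pk μ Ω t₀ w C S) (x : G) : Measurable (fun r => w x r) :=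
  hP.meas.comp (measurable_const.prodMk measurable_id)

theorem NLS.lint_inner_le (H : NLS μ Ω F' K M t₀) (hP : Pk μ Ω t₀ w C S)
    {r : ℝ} (hr : r ∈ Icc (0:ℝ) t₀) :
    ∫⁻ x in Ω, ‖w x r‖₊ ∂μ ≤ ENNReal.ofReal S := by
  simp only [← enorm_eq_nnnorm]
  rw [← ofReal_integral_norm_eq_lintegral_enorm (hP.intOn r hr)]
  apply ENNReal.ofReal_le_ofReal
  simpa [Real.norm_eq_abs] using hP.bndInt r hr

theorem NLS.lint_swap' (H : NLS μ Ω F' K M t₀) (hP : Pk μ Ω t₀ w C S)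
    {T : Set ℝ} (hTm : MeasurableSet T) (hT : T ⊆ Icc (0:ℝ) t₀) :
    ∫⁻ x in Ω, ∫⁻ r in T, (‖w x r‖₊ : ENNReal) ∂volume ∂μ ≤ ENNReal.ofReal S * volume T := by
  haveI := H.finΩ
  rw [lintegral_lintegral_swap (f := fun x r => (‖w x r‖₊ : ENNReal))
    hP.meas.nnnorm.coe_nnreal_ennreal.aemeasurable]
  calc ∫⁻ r in T, ∫⁻ x in Ω, (‖w x r‖₊ : ENNReal) ∂μ ∂volume
      ≤ ∫⁻ r in T, ENNReal.ofReal S ∂volume := by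
        apply lintegral_mono_ae
        filter_upwards [ae_restrict_mem hTm] with r hr
        exact H.lint_inner_le hP (hT hr)
    _ = ENNReal.ofReal S * volume T := by
        simp [lintegral_const, Measure.restrict_apply_univ]

theorem NLS.ae_time_integrable (H : NLS μ Ω F' K M t₀) (hP : Pk μ Ω t₀ w C S) :
    ∀ᵐ x ∂(μ.restrict Ω), IntegrableOn (fun r => w x r) (Icc (0:ℝ) t₀) volume := by
  have hmeas : Measurable fun x => ∫⁻ r in Icc (0:ℝ) t₀, (‖w x r‖₊ : ENNReal) ∂volume :=
    Measurable.lintegral_prod_right' (f := fun p : G × ℝ => (‖w p.1 p.2‖₊ : ENNReal))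
      hP.meas.nnnorm.coe_nnreal_ennreal
  have hfin : ∫⁻ x in Ω, (∫⁻ r in Icc (0:ℝ) t₀, (‖w x r‖₊ : ENNReal) ∂volume) ∂μ ≠ ⊤ := by
    apply ne_top_of_le_ne_top _ (H.lint_swap' hP measurableSet_Icc (subset_refl _))
    exact (ENNReal.mul_lt_top ENNReal.ofReal_lt_top
      (by rw [Real.volume_Icc]; exact ENNReal.ofReal_lt_top)).ne
  filter_upwards [ae_lt_top hmeas hfin] with x hx
  exact ⟨(hP.meas_time x).aestronglyMeasurable.restrict, hx⟩

theorem NLS.intervalIntegrable_time (H : NLS μ Ω F' K M t₀)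
    {x : G} (hxint : IntegrableOn (fun r => w x r) (Icc (0:ℝ) t₀) volume)
    {a b : ℝ} (ha : a ∈ Icc (0:ℝ) t₀) (hb : b ∈ Icc (0:ℝ) t₀) :
    IntervalIntegrable (fun r => w x r) volume a b := by
  rw [intervalIntegrable_iff]
  apply hxint.mono_set
  intro r hr
  exact ⟨le_of_lt (lt_of_le_of_lt (le_min ha.1 hb.1) hr.1),
    le_trans hr.2 (max_le ha.2 hb.2)⟩

theorem uIoc_sub_Icc {a b : ℝ} (ha : a ∈ Icc (0:ℝ) t₀) (hb : b ∈ Icc (0:ℝ) t₀) :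
    Set.uIoc a b ⊆ Icc (0:ℝ) t₀ := fun r hr =>
  ⟨le_of_lt (lt_of_le_of_lt (le_min ha.1 hb.1) hr.1), le_trans hr.2 (max_le ha.2 hb.2)⟩

theorem NLS.intervalIntegrable_flux (H : NLS μ Ω F' K M t₀) (hP : Pk μ Ω t₀ w C S)
    {x : G} (hx : x ∈ Ω) (hxint : IntegrableOn (fun r => w x r) (Icc (0:ℝ) t₀) volume)
    {a b : ℝ} (ha : a ∈ Icc (0:ℝ) t₀) (hb : b ∈ Icc (0:ℝ) t₀) :
    IntervalIntegrable (fun r => flux μ K w x r) volume a b := by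
  rw [intervalIntegrable_iff]
  have hbl : IntegrableOn
      (fun r => M * ((S + C * (μ F').toReal) + (μ F').toReal * |w x r|)) (uIoc a b) volume := by
    apply IntegrableOn.mono_set _ (uIoc_sub_Icc ha hb)
    apply Integrable.const_mul
    apply Integrable.add (integrableOn_const (by
      rw [Real.volume_Icc]; exact ENNReal.ofReal_lt_top.ne))
    exact hxint.abs.const_mul _
  apply Integrable.mono' hbl ((H.flux_meas_sect hP.meas x).aestronglyMeasurable.restrict)
  filter_upwards [ae_restrict_mem measurableSet_uIoc] with r hr
  rw [Real.norm_eq_abs]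
  exact H.abs_flux_le hP hx (uIoc_sub_Icc ha hb hr)

theorem NLS.abs_intInt_flux_le (H : NLS μ Ω F' K M t₀) (hP : Pk μ Ω t₀ w C S)
    {x : G} (hx : x ∈ Ω) (hxint : IntegrableOn (fun r => w x r) (Icc (0:ℝ) t₀) volume)
    {a b : ℝ} (ha : a ∈ Icc (0:ℝ) t₀) (hb : b ∈ Icc (0:ℝ) t₀) (hab : a ≤ b) :
    |∫ r in a..b, flux μ K w x r| ≤
      (b - a) * (M * (S + C * (μ F').toReal)) +
        (M * (μ F').toReal) * ∫ r in a..b, |w x r| := by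
  have hIf := H.intervalIntegrable_flux hP hx hxint ha hb
  have hIw := H.intervalIntegrable_time hxint ha hb
  have hIc : IntervalIntegrable (fun _ : ℝ => M * (S + C * (μ F').toReal)) volume a b :=
    intervalIntegrable_const
  calc |∫ r in a..b, flux μ K w x r| ≤ ∫ r in a..b, |flux μ K w x r| :=
        intervalIntegral.abs_integral_le_integral_abs hab
    _ ≤ ∫ r in a..b, (M * (S + C * (μ F').toReal) + (M * (μ F').toReal) * |w x r|) := by
        apply intervalIntegral.integral_mono_on hab hIf.abs
          (hIc.add ((hIw.abs.const_mul _)))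
        intro r hr
        have := H.abs_flux_le hP hx (⟨le_trans ha.1 hr.1, le_trans hr.2 hb.2⟩)
        calc |flux μ K w x r| ≤ M * ((S + C * (μ F').toReal) + (μ F').toReal * |w x r|) :=
              this
          _ = M * (S + C * (μ F').toReal) + (M * (μ F').toReal) * |w x r| := by ring
    _ = (b - a) * (M * (S + C * (μ F').toReal)) +
        (M * (μ F').toReal) * ∫ r in a..b, |w x r| := by
        rw [intervalIntegral.integral_add hIc (hIw.abs.const_mul _),
          intervalIntegral.integral_const, intervalIntegral.integral_const_mul,
          smul_eq_mul]

theorem Pk.timeint_meas (hP : Pk μ Ω t₀ w C S) (a b : ℝ) :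
    StronglyMeasurable (fun x => ∫ r in Ioc a b, |w x r| ∂volume) :=
  MeasureTheory.StronglyMeasurable.integral_prod_right'
    (f := fun p : G × ℝ => |w p.1 p.2|) hP.meas.abs.stronglyMeasurable

theorem NLS.timeint_int (H : NLS μ Ω F' K M t₀) (hP : Pk μ Ω t₀ w C S)
    {a b : ℝ} (ha : a ∈ Icc (0:ℝ) t₀) (hb : b ∈ Icc (0:ℝ) t₀) (hab : a ≤ b) :
    IntegrableOn (fun x => ∫ r in a..b, |w x r|) Ω μ := by
  have heq : (fun x => ∫ r in a..b, |w x r|) = fun x => ∫ r in Ioc a b, |w x r| ∂volume := by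
    ext x; rw [intervalIntegral.integral_of_le hab]
  rw [heq]
  refine ⟨(hP.timeint_meas a b).aestronglyMeasurable.restrict, ?_⟩
  rw [hasFiniteIntegral_def]
  have hIoc : Ioc a b ⊆ Icc (0:ℝ) t₀ := fun r hr => ⟨le_of_lt (lt_of_le_of_lt ha.1 hr.1),
    le_trans hr.2 hb.2⟩
  calc ∫⁻ x in Ω, ‖∫ r in Ioc a b, |w x r| ∂volume‖₊ ∂μ
      ≤ ∫⁻ x in Ω, ∫⁻ r in Ioc a b, (‖w x r‖₊ : ENNReal) ∂volume ∂μ := by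
        apply lintegral_mono
        intro x
        refine le_trans (enorm_integral_le_lintegral_enorm _) (le_of_eq ?_)
        congr 1; ext r; simp; rfl
    _ ≤ ENNReal.ofReal S * volume (Ioc a b) := H.lint_swap' hP measurableSet_Ioc hIoc
    _ < ⊤ := ENNReal.mul_lt_top ENNReal.ofReal_lt_top
        (by rw [Real.volume_Ioc]; exact ENNReal.ofReal_lt_top)

theorem NLS.timeint_bound (H : NLS μ Ω F' K M t₀) (hP : Pk μ Ω t₀ w C S)
    {a b : ℝ} (ha : a ∈ Icc (0:ℝ) t₀) (hb : b ∈ Icc (0:ℝ) t₀) (hab : a ≤ b) :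
    ∫ x in Ω, (∫ r in a..b, |w x r|) ∂μ ≤ (b - a) * S := by
  have hIoc : Ioc a b ⊆ Icc (0:ℝ) t₀ := fun r hr => ⟨le_of_lt (lt_of_le_of_lt ha.1 hr.1),
    le_trans hr.2 hb.2⟩
  have hnn : 0 ≤ᵐ[μ.restrict Ω] fun x => ∫ r in a..b, |w x r| := by
    filter_upwards with x
    exact intervalIntegral.integral_nonneg hab (fun r _ => abs_nonneg _)
  have heq : (fun x => ∫ r in a..b, |w x r|) = fun x => ∫ r in Ioc a b, |w x r| ∂volume := by
    ext x; rw [intervalIntegral.integral_of_le hab]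
  rw [integral_eq_lintegral_of_nonneg_ae hnn
    (by rw [heq]; exact (hP.timeint_meas a b).aestronglyMeasurable.restrict)]
  have hle : ∫⁻ x in Ω, ENNReal.ofReal (∫ r in a..b, |w x r|) ∂μ ≤
      ENNReal.ofReal ((b - a) * S) := by
    calc ∫⁻ x in Ω, ENNReal.ofReal (∫ r in a..b, |w x r|) ∂μ
        ≤ ∫⁻ x in Ω, ∫⁻ r in Ioc a b, (‖w x r‖₊ : ENNReal) ∂volume ∂μ := by
          apply lintegral_mono
          intro x
          show ENNReal.ofReal (∫ r in a..b, |w x r|) ≤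
            ∫⁻ r in Ioc a b, (‖w x r‖₊ : ENNReal) ∂volume
          rw [intervalIntegral.integral_of_le hab]
          refine le_trans (Real.ofReal_le_enorm _)
            (le_trans (enorm_integral_le_lintegral_enorm _) (le_of_eq ?_))
          congr 1; ext r; simp; rfl
      _ ≤ ENNReal.ofReal S * volume (Ioc a b) := H.lint_swap' hP measurableSet_Ioc hIoc
      _ = ENNReal.ofReal ((b - a) * S) := by
          rw [Real.volume_Ioc, ← ENNReal.ofReal_mul hP.hS, mul_comm]
  exact ENNReal.toReal_le_of_le_ofReal (mul_nonneg (by linarith) hP.hS) hle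

theorem NLS.intInt_flux_meas (H : NLS μ Ω F' K M t₀)
    (hw : Measurable (fun p : G × ℝ => w p.1 p.2)) (a b : ℝ) :
    StronglyMeasurable (fun x => ∫ r in Ioc a b, flux μ K w x r ∂volume) :=
  MeasureTheory.StronglyMeasurable.integral_prod_right'
    (f := fun p : G × ℝ => flux μ K w p.1 p.2) (H.flux_stronglyMeasurable hw)

/-- The main estimate: `∫_Ω |∫_a^b Φw| ≤ (b-a) M (μΩ (S + C μF') + μF' S)`,
together with integrability of the inner interval integral. -/
theorem NLS.main_estimate (H : NLS μ Ω F' K M t₀) (hP : Pk μ Ω t₀ w C S)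
    {a b : ℝ} (ha : a ∈ Icc (0:ℝ) t₀) (hb : b ∈ Icc (0:ℝ) t₀) (hab : a ≤ b) :
    IntegrableOn (fun x => ∫ r in a..b, flux μ K w x r) Ω μ ∧
    ∫ x in Ω, |∫ r in a..b, flux μ K w x r| ∂μ ≤
      (b - a) * (M * ((μ Ω).toReal * (S + C * (μ F').toReal) + (μ F').toReal * S)) := by
  set D : G → ℝ := fun x => (b - a) * (M * (S + C * (μ F').toReal)) +
      (M * (μ F').toReal) * ∫ r in a..b, |w x r| with hD
  have hDint : IntegrableOn D Ω μ := by
    apply Integrable.add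
    · exact integrableOn_const H.hΩfin.ne
    · exact (H.timeint_int hP ha hb hab).const_mul _
  have hae : ∀ᵐ x ∂(μ.restrict Ω), |∫ r in a..b, flux μ K w x r| ≤ D x := by
    filter_upwards [ae_restrict_mem H.hΩm, H.ae_time_integrable hP] with x hx hxint
    exact H.abs_intInt_flux_le hP hx hxint ha hb hab
  have hmeas : AEStronglyMeasurable (fun x => ∫ r in a..b, flux μ K w x r) (μ.restrict Ω) := by
    have : (fun x => ∫ r in a..b, flux μ K w x r) =
        fun x => ∫ r in Ioc a b, flux μ K w x r ∂volume := by
      ext x; rw [intervalIntegral.integral_of_le hab]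
    rw [this]
    exact (H.intInt_flux_meas hP.meas a b).aestronglyMeasurable.restrict
  have hint : IntegrableOn (fun x => ∫ r in a..b, flux μ K w x r) Ω μ := by
    apply Integrable.mono' hDint hmeas
    filter_upwards [hae] with x hx
    rwa [Real.norm_eq_abs]
  refine ⟨hint, ?_⟩
  calc ∫ x in Ω, |∫ r in a..b, flux μ K w x r| ∂μ ≤ ∫ x in Ω, D x ∂μ :=
        integral_mono_ae hint.abs hDint hae
    _ = (b - a) * (M * (S + C * (μ F').toReal)) * (μ Ω).toReal +
        (M * (μ F').toReal) * ∫ x in Ω, (∫ r in a..b, |w x r|) ∂μ := by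
        rw [hD, integral_add (integrableOn_const (C := (b - a) * (M * (S + C * (μ F').toReal))) H.hΩfin.ne).integrable
          ((H.timeint_int hP ha hb hab).const_mul _), setIntegral_const, smul_eq_mul, measureReal_def,
          integral_const_mul, mul_comm ((μ Ω).toReal)]
    _ ≤ (b - a) * (M * (S + C * (μ F').toReal)) * (μ Ω).toReal +
        (M * (μ F').toReal) * ((b - a) * S) := by
        gcongr
        · exact mul_nonneg H.hM.le (ENNReal.toReal_nonneg)
        · exact H.timeint_bound hP ha hb hab
    _ = (b - a) * (M * ((μ Ω).toReal * (S + C * (μ F').toReal) + (μ F').toReal * S)) := by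
        ring

theorem NLS.T_meas (H : NLS μ Ω F' K M t₀) (hgmeas : Measurable (fun p : G × ℝ => g p.1 p.2))
    (hw : Measurable (fun p : G × ℝ => w p.1 p.2)) :
    Measurable (fun p : G × ℝ => nonlocalT μ Ω K g w p.1 p.2) := by
  have hflux := (H.flux_stronglyMeasurable hw).measurable
  have h2 : Measurable fun p : G × ℝ => ∫ r in (0:ℝ)..p.2, flux μ K w p.1 r := by
    have hof : ∀ (c : ℝ), Measurable fun p : G × ℝ =>
        ∫ r, (if r ∈ Ioc c p.2 then flux μ K w p.1 r else 0) ∂volume := by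
      intro c
      apply (MeasureTheory.StronglyMeasurable.integral_prod_right'
        (f := fun q : (G × ℝ) × ℝ =>
          if q.2 ∈ Ioc c q.1.2 then flux μ K w q.1.1 q.2 else 0) ?_).measurable
      apply Measurable.stronglyMeasurable
      apply Measurable.ite
      · have he : {q : (G × ℝ) × ℝ | q.2 ∈ Ioc c q.1.2} =
            {q : (G × ℝ) × ℝ | c < q.2} ∩ {q | q.2 ≤ q.1.2} := by
          ext q; simp [Set.mem_Ioc]
        rw [he]
        exact (measurableSet_lt measurable_const measurable_snd).inter
          (measurableSet_le measurable_snd measurable_fst.snd)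
      · exact hflux.comp (measurable_fst.fst.prodMk measurable_snd)
      · exact measurable_const
    have hof2 : ∀ (c : ℝ), Measurable fun p : G × ℝ =>
        ∫ r, (if r ∈ Ioc p.2 c then flux μ K w p.1 r else 0) ∂volume := by
      intro c
      apply (MeasureTheory.StronglyMeasurable.integral_prod_right'
        (f := fun q : (G × ℝ) × ℝ =>
          if q.2 ∈ Ioc q.1.2 c then flux μ K w q.1.1 q.2 else 0) ?_).measurable
      apply Measurable.stronglyMeasurable
      apply Measurable.ite
      · have he : {q : (G × ℝ) × ℝ | q.2 ∈ Ioc q.1.2 c} =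
            {q : (G × ℝ) × ℝ | q.1.2 < q.2} ∩ {q | q.2 ≤ c} := by
          ext q; simp [Set.mem_Ioc]
        rw [he]
        exact (measurableSet_lt measurable_fst.snd measurable_snd).inter
          (measurableSet_le measurable_snd measurable_const)
      · exact hflux.comp (measurable_fst.fst.prodMk measurable_snd)
      · exact measurable_const
    have heq : (fun p : G × ℝ => ∫ r in (0:ℝ)..p.2, flux μ K w p.1 r) =
        fun p : G × ℝ =>
          (∫ r, (if r ∈ Ioc (0:ℝ) p.2 then flux μ K w p.1 r else 0) ∂volume) -
          ∫ r, (if r ∈ Ioc p.2 (0:ℝ) then flux μ K w p.1 r else 0) ∂volume := by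
      ext p
      have hi1 : (fun r => if r ∈ Ioc (0:ℝ) p.2 then flux μ K w p.1 r else 0) =
          (Ioc (0:ℝ) p.2).indicator (fun r => flux μ K w p.1 r) := by
        ext r; rw [Set.indicator_apply]
      have hi2 : (fun r => if r ∈ Ioc p.2 (0:ℝ) then flux μ K w p.1 r else 0) =
          (Ioc p.2 (0:ℝ)).indicator (fun r => flux μ K w p.1 r) := by
        ext r; rw [Set.indicator_apply]
      rw [hi1, hi2, integral_indicator measurableSet_Ioc, integral_indicator measurableSet_Ioc]
      rfl
    rw [heq]
    exact (hof 0).sub (hof2 0)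
  have hcond : MeasurableSet {p : G × ℝ | p.1 ∈ Ω} := measurable_fst H.hΩm
  apply Measurable.ite hcond
  · exact (hw.comp (measurable_fst.prodMk measurable_const)).add h2
  · exact hgmeas

theorem NLS.Pk_of_memX (H : NLS μ Ω F' K M t₀) {C : ℝ} (hgC : ∀ x t, |g x t| ≤ C)
    (hC : 0 ≤ C) (hw : MemX μ Ω g t₀ w) : ∃ S, 0 ≤ S ∧ Pk μ Ω t₀ w C S := by
  obtain ⟨S, hS0, hS⟩ := exists_S hw.2.2.1 hw.2.2.2
  exact ⟨S, hS0, ⟨hw.1, fun x hx t ht => by rw [hw.2.1 x hx t ht]; exact hgC x t,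
    hw.2.2.1, hS, hC, hS0⟩⟩

theorem NLS.T_eq_on (H : NLS μ Ω F' K M t₀) {x : G} (hx : x ∈ Ω) (t : ℝ) :
    nonlocalT μ Ω K g w x t = w x 0 + ∫ r in (0:ℝ)..t, flux μ K w x r := by
  simp only [nonlocalT, if_pos hx]; rfl

/-- `𝔗` maps `X` into `X`. -/
theorem NLS.T_memX (H : NLS μ Ω F' K M t₀) {C : ℝ}
    (hgmeas : Measurable (fun p : G × ℝ => g p.1 p.2)) (hgC : ∀ x t, |g x t| ≤ C)
    (hC : 0 ≤ C) (hw : MemX μ Ω g t₀ w) : MemX μ Ω g t₀ (nonlocalT μ Ω K g w) := by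
  obtain ⟨S, hS0, hP⟩ := H.Pk_of_memX hgC hC hw
  have h0mem : (0:ℝ) ∈ Icc (0:ℝ) t₀ := left_mem_Icc.2 H.ht₀.le
  set B : ℝ := M * ((μ Ω).toReal * (S + C * (μ F').toReal) + (μ F').toReal * S) with hB
  have hB0 : 0 ≤ B := by
    apply mul_nonneg H.hM.le
    have := hP.hC
    have h1 : (0:ℝ) ≤ S + C * (μ F').toReal :=
      add_nonneg hS0 (mul_nonneg hP.hC ENNReal.toReal_nonneg)
    positivity
  have key : ∀ s ∈ Icc (0:ℝ) t₀, ∀ t ∈ Icc (0:ℝ) t₀,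
      ∫ x in Ω, |nonlocalT μ Ω K g w x t - nonlocalT μ Ω K g w x s| ∂μ ≤ |t - s| * B := by
    intro s hs t ht
    have hkey : ∀ᵐ x ∂(μ.restrict Ω),
        |nonlocalT μ Ω K g w x t - nonlocalT μ Ω K g w x s| = |∫ r in s..t, flux μ K w x r| := by
      filter_upwards [ae_restrict_mem H.hΩm, H.ae_time_integrable hP] with x hx hxint
      rw [H.T_eq_on hx, H.T_eq_on hx]
      have := intervalIntegral.integral_interval_sub_left
        (H.intervalIntegrable_flux hP hx hxint h0mem ht)
        (H.intervalIntegrable_flux hP hx hxint h0mem hs)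
      rw [← this]; ring_nf
    rw [integral_congr_ae hkey]
    rcases le_total s t with hst | hst
    · have := (H.main_estimate hP hs ht hst).2
      rwa [abs_of_nonneg (by linarith : (0:ℝ) ≤ t - s)]
    · have h2 := (H.main_estimate hP ht hs hst).2
      have heq : ∀ x, |∫ r in s..t, flux μ K w x r| = |∫ r in t..s, flux μ K w x r| := by
        intro x; rw [intervalIntegral.integral_symm, abs_neg]
      calc ∫ x in Ω, |∫ r in s..t, flux μ K w x r| ∂μ
          = ∫ x in Ω, |∫ r in t..s, flux μ K w x r| ∂μ := by
            apply integral_congr_ae; filter_upwards with x; exact heq x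
        _ ≤ (s - t) * B := h2
        _ = |t - s| * B := by rw [abs_of_nonpos (by linarith : t - s ≤ 0)]; ring
  refine ⟨H.T_meas hgmeas hw.1, ?_, ?_, ?_⟩
  · intro x hx t _
    simp [nonlocalT, if_neg hx]
  · intro t ht
    have hint : IntegrableOn (fun x => w x 0 + ∫ r in (0:ℝ)..t, flux μ K w x r) Ω μ :=
      (hw.2.2.1 0 h0mem).add (H.main_estimate hP h0mem ht ht.1).1
    apply hint.congr_fun _ H.hΩm
    intro x hx
    exact (H.T_eq_on hx t).symm
  · intro s hs
    apply squeeze_zero' (g := fun t => |t - s| * B)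
    · filter_upwards with t
      exact integral_nonneg fun x => abs_nonneg _
    · filter_upwards [self_mem_nhdsWithin] with t ht
      exact key s hs t ht
    · have hcont : Tendsto (fun t : ℝ => |t - s| * B) (nhds s) (nhds (|s - s| * B)) := by
        apply Continuous.tendsto
        continuity
      simp only [sub_self, abs_zero, zero_mul] at hcont
      exact hcont.mono_left nhdsWithin_le_nhds

theorem NLS.T_at_zero (H : NLS μ Ω F' K M t₀) :
    (fun x => nonlocalT μ Ω K g w x 0) =ᵐ[μ.restrict Ω] (fun x => w x 0) := by
  filter_upwards [ae_restrict_mem H.hΩm] with x hx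
  rw [H.T_eq_on hx, intervalIntegral.integral_same, add_zero]

theorem NLS.T_memX0 (H : NLS μ Ω F' K M t₀) {C : ℝ} {u₀ : G → ℝ}
    (hgmeas : Measurable (fun p : G × ℝ => g p.1 p.2)) (hgC : ∀ x t, |g x t| ≤ C)
    (hC : 0 ≤ C) (hw : MemX0 μ Ω g t₀ u₀ w) : MemX0 μ Ω g t₀ u₀ (nonlocalT μ Ω K g w) :=
  ⟨H.T_memX hgmeas hgC hC hw.1, H.T_at_zero.trans hw.2⟩

theorem sub_cond4 {v : G → ℝ → ℝ}
    (hw1 : ∀ t ∈ Icc (0:ℝ) t₀, IntegrableOn (fun x => w x t) Ω μ)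
    (hw4 : ∀ s ∈ Icc (0:ℝ) t₀,
      Tendsto (fun t => ∫ x in Ω, |w x t - w x s| ∂μ) (nhdsWithin s (Icc (0:ℝ) t₀)) (nhds 0))
    (hv1 : ∀ t ∈ Icc (0:ℝ) t₀, IntegrableOn (fun x => v x t) Ω μ)
    (hv4 : ∀ s ∈ Icc (0:ℝ) t₀,
      Tendsto (fun t => ∫ x in Ω, |v x t - v x s| ∂μ) (nhdsWithin s (Icc (0:ℝ) t₀)) (nhds 0)) :
    ∀ s ∈ Icc (0:ℝ) t₀,
      Tendsto (fun t => ∫ x in Ω, |(w x t - v x t) - (w x s - v x s)| ∂μ)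
        (nhdsWithin s (Icc (0:ℝ) t₀)) (nhds 0) := by
  intro s hs
  apply squeeze_zero'
  · filter_upwards with t
    exact integral_nonneg fun x => abs_nonneg _
  · filter_upwards [self_mem_nhdsWithin] with t ht
    calc ∫ x in Ω, |(w x t - v x t) - (w x s - v x s)| ∂μ
        ≤ ∫ x in Ω, (|w x t - w x s| + |v x t - v x s|) ∂μ := by
          apply integral_mono (((hw1 t ht).sub (hv1 t ht)).sub
            ((hw1 s hs).sub (hv1 s hs))).abs
            (((hw1 t ht).sub (hw1 s hs)).abs.add ((hv1 t ht).sub (hv1 s hs)).abs)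
          intro x
          show |(w x t - v x t) - (w x s - v x s)| ≤ |w x t - w x s| + |v x t - v x s|
          have he : (w x t - v x t) - (w x s - v x s) = (w x t - w x s) - (v x t - v x s) := by
            ring
          rw [he]
          exact abs_sub _ _
      _ = (∫ x in Ω, |w x t - w x s| ∂μ) + ∫ x in Ω, |v x t - v x s| ∂μ :=
          integral_add ((hw1 t ht).sub (hw1 s hs)).abs ((hv1 t ht).sub (hv1 s hs)).abs
  · simpa using (hw4 s hs).add (hv4 s hs)

/-- The core contraction estimate. -/
theorem NLS.contract (H : NLS μ Ω F' K M t₀) {C : ℝ} {u₀ : G → ℝ} {v : G → ℝ → ℝ}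
    (hgC : ∀ x t, |g x t| ≤ C) (hC : 0 ≤ C)
    (hw : MemX0 μ Ω g t₀ u₀ w) (hv : MemX0 μ Ω g t₀ u₀ v) :
    ∀ t ∈ Icc (0:ℝ) t₀,
      ∫ x in Ω, |nonlocalT μ Ω K g w x t - nonlocalT μ Ω K g v x t| ∂μ ≤
        M * ((μ Ω).toReal + (μ F').toReal) * t₀ *
          tripleNorm μ Ω t₀ (fun x t => w x t - v x t) := by
  obtain ⟨Sw, hSw0, hPw⟩ := H.Pk_of_memX hgC hC hw.1
  obtain ⟨Sv, hSv0, hPv⟩ := H.Pk_of_memX hgC hC hv.1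
  have h0mem : (0:ℝ) ∈ Icc (0:ℝ) t₀ := left_mem_Icc.2 H.ht₀.le
  set δ : G → ℝ → ℝ := fun x t => w x t - v x t with hδ
  have hbdd : BddAbove ((fun t => ∫ x in Ω, |δ x t| ∂μ) '' Icc (0:ℝ) t₀) :=
    bddAbove_sub hw.1.2.2.1 hw.1.2.2.2 hv.1.2.2.1 hv.1.2.2.2
  set Sδ : ℝ := tripleNorm μ Ω t₀ δ with hSδ
  have hSδle : ∀ r ∈ Icc (0:ℝ) t₀, ∫ x in Ω, |δ x r| ∂μ ≤ Sδ := fun r hr =>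
    le_tripleNorm' hbdd hr
  have hSδ0 : 0 ≤ Sδ :=
    le_trans (integral_nonneg fun x => abs_nonneg _) (hSδle 0 h0mem)
  have hPδ : Pk μ Ω t₀ δ 0 Sδ := by
    refine ⟨hw.1.1.sub hv.1.1, fun x hx t ht => ?_, fun t ht => (hw.1.2.2.1 t ht).sub
      (hv.1.2.2.1 t ht), hSδle, le_refl 0, hSδ0⟩
    rw [hδ]
    simp only
    rw [hw.1.2.1 x hx t ht, hv.1.2.1 x hx t ht, sub_self, abs_zero]
  intro t ht
  have hkey : ∀ᵐ x ∂(μ.restrict Ω),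
      |nonlocalT μ Ω K g w x t - nonlocalT μ Ω K g v x t| = |∫ r in (0:ℝ)..t, flux μ K δ x r| := by
    filter_upwards [ae_restrict_mem H.hΩm, H.ae_time_integrable hPw, H.ae_time_integrable hPv,
      hw.2, hv.2] with x hx hxw hxv hw0 hv0
    rw [H.T_eq_on hx, H.T_eq_on hx]
    have h0 : w x 0 = v x 0 := by rw [hw0, hv0]
    have hIw := H.intervalIntegrable_flux hPw hx hxw h0mem ht
    have hIv := H.intervalIntegrable_flux hPv hx hxv h0mem ht
    have hsub : (∫ r in (0:ℝ)..t, flux μ K w x r) - ∫ r in (0:ℝ)..t, flux μ K v x r =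
        ∫ r in (0:ℝ)..t, (flux μ K w x r - flux μ K v x r) :=
      (intervalIntegral.integral_sub hIw hIv).symm
    have hcongr : ∀ r ∈ uIcc (0:ℝ) t, flux μ K w x r - flux μ K v x r = flux μ K δ x r := by
      intro r hr
      have hr' : r ∈ Icc (0:ℝ) t₀ := by
        rcases hr with ⟨h1, h2⟩
        constructor
        · exact le_trans (le_of_eq (min_eq_left ht.1).symm) h1
        · exact le_trans (le_trans h2 (le_of_eq (max_eq_right ht.1))) ht.2
      rw [flux, flux, flux, ← integral_sub (H.integrable_integrand hPw hx hr')
        (H.integrable_integrand hPv hx hr')]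
      congr 1
      ext y
      show K x y * (w y r - w x r) - K x y * (v y r - v x r) =
        K x y * ((w y r - v y r) - (w x r - v x r))
      ring
    have hIδ : (∫ r in (0:ℝ)..t, flux μ K w x r) - (∫ r in (0:ℝ)..t, flux μ K v x r) =
        ∫ r in (0:ℝ)..t, flux μ K δ x r :=
      hsub.trans (intervalIntegral.integral_congr (g := fun r => flux μ K δ x r) hcongr)
    rw [h0, show (v x 0 + ∫ r in (0:ℝ)..t, flux μ K w x r) -
        (v x 0 + ∫ r in (0:ℝ)..t, flux μ K v x r) =
        (∫ r in (0:ℝ)..t, flux μ K w x r) - ∫ r in (0:ℝ)..t, flux μ K v x r from by ring, hIδ]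
  rw [integral_congr_ae hkey]
  have hest := (H.main_estimate hPδ h0mem ht ht.1).2
  calc ∫ x in Ω, |∫ r in (0:ℝ)..t, flux μ K δ x r| ∂μ
      ≤ (t - 0) * (M * ((μ Ω).toReal * (Sδ + 0 * (μ F').toReal) + (μ F').toReal * Sδ)) := hest
    _ = M * ((μ Ω).toReal + (μ F').toReal) * t * Sδ := by ring
    _ ≤ M * ((μ Ω).toReal + (μ F').toReal) * t₀ * Sδ := by
        apply mul_le_mul_of_nonneg_right _ hSδ0
        apply mul_le_mul_of_nonneg_left ht.2
        exact mul_nonneg H.hM.le (add_nonneg ENNReal.toReal_nonneg ENNReal.toReal_nonneg)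

theorem NLS.existence (H : NLS μ Ω F' K M t₀) {C : ℝ} {u₀ : G → ℝ}
    (hgmeas : Measurable (fun p : G × ℝ => g p.1 p.2)) (hgC : ∀ x t, |g x t| ≤ C)
    (hC : 0 ≤ C) (hu₀ : IntegrableOn u₀ Ω μ)
    (hsmall : M * ((μ Ω).toReal + (μ F').toReal) * t₀ < 1) :
    ∃ u, MemX0 μ Ω g t₀ u₀ u ∧
      (∀ t ∈ Icc (0:ℝ) t₀,
        (fun x => u x t) =ᵐ[μ.restrict Ω] fun x => nonlocalT μ Ω K g u x t) := by
  classical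
  set q : ℝ := M * ((μ Ω).toReal + (μ F').toReal) * t₀ with hqdef
  have hq0 : 0 ≤ q := by
    apply mul_nonneg (mul_nonneg H.hM.le
      (add_nonneg ENNReal.toReal_nonneg ENNReal.toReal_nonneg)) H.ht₀.le
  have h0mem : (0:ℝ) ∈ Icc (0:ℝ) t₀ := left_mem_Icc.2 H.ht₀.le
  -- measurable representative of u₀
  set u₀' : G → ℝ := hu₀.1.mk u₀ with hu₀'def
  have hu₀'meas : Measurable u₀' := hu₀.1.stronglyMeasurable_mk.measurable
  have hu₀'ae : u₀ =ᵐ[μ.restrict Ω] u₀' := hu₀.1.ae_eq_mk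
  -- initial iterate
  set w₀ : G → ℝ → ℝ := fun x t => if x ∈ Ω then u₀' x else g x t with hw₀def
  have hw₀X : MemX0 μ Ω g t₀ u₀ w₀ := by
    refine ⟨⟨?_, ?_, ?_, ?_⟩, ?_⟩
    · exact Measurable.ite (measurable_fst H.hΩm) (hu₀'meas.comp measurable_fst) hgmeas
    · intro x hx t _
      simp only [hw₀def, if_neg hx]
    · intro t _
      have h1 : IntegrableOn u₀' Ω μ := hu₀.congr hu₀'ae
      apply h1.congr_fun _ H.hΩm
      intro x hx
      simp only [hw₀def, if_pos hx]
    · intro s hs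
      have hz : ∀ t : ℝ, ∫ x in Ω, |w₀ x t - w₀ x s| ∂μ = 0 := by
        intro t
        apply integral_eq_zero_of_ae
        filter_upwards [ae_restrict_mem H.hΩm] with x hx
        simp only [hw₀def, if_pos hx, sub_self, abs_zero, Pi.zero_apply]
      have : (fun t => ∫ x in Ω, |w₀ x t - w₀ x s| ∂μ) = fun _ => (0:ℝ) := funext hz
      rw [this]
      exact tendsto_const_nhds
    · filter_upwards [ae_restrict_mem H.hΩm, hu₀'ae] with x hx h2
      simp only [hw₀def, if_pos hx]
      exact h2.symm
  -- the iterates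
  set ws : ℕ → G → ℝ → ℝ := fun n => (nonlocalT μ Ω K g)^[n] w₀ with hwsdef
  have hws0 : ws 0 = w₀ := rfl
  have hwssucc : ∀ n, ws (n + 1) = nonlocalT μ Ω K g (ws n) := by
    intro n
    simp only [hwsdef]
    exact Function.iterate_succ_apply' _ _ _
  have hwsX : ∀ n, MemX0 μ Ω g t₀ u₀ (ws n) := by
    intro n
    induction n with
    | zero => exact hw₀X
    | succ n ih => rw [hwssucc n]; exact H.T_memX0 hgmeas hgC hC ih
  -- distance functional
  have hbdd2 : ∀ a b : G → ℝ → ℝ, MemX0 μ Ω g t₀ u₀ a → MemX0 μ Ω g t₀ u₀ b →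
      BddAbove ((fun t => ∫ x in Ω, |a x t - b x t| ∂μ) '' Icc (0:ℝ) t₀) := by
    intro a b ha hb
    exact bddAbove_sub ha.1.2.2.1 ha.1.2.2.2 hb.1.2.2.1 hb.1.2.2.2
  have hDper : ∀ a b : G → ℝ → ℝ, MemX0 μ Ω g t₀ u₀ a → MemX0 μ Ω g t₀ u₀ b →
      ∀ t ∈ Icc (0:ℝ) t₀, ∫ x in Ω, |a x t - b x t| ∂μ ≤
        tripleNorm μ Ω t₀ (fun x t => a x t - b x t) := by
    intro a b ha hb t ht
    exact le_tripleNorm' (hbdd2 a b ha hb) ht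
  have hDnn : ∀ a b : G → ℝ → ℝ, MemX0 μ Ω g t₀ u₀ a → MemX0 μ Ω g t₀ u₀ b →
      0 ≤ tripleNorm μ Ω t₀ (fun x t => a x t - b x t) := by
    intro a b ha hb
    exact le_trans (integral_nonneg fun x => abs_nonneg _) (hDper a b ha hb 0 h0mem)
  have hcontr : ∀ a b : G → ℝ → ℝ, MemX0 μ Ω g t₀ u₀ a → MemX0 μ Ω g t₀ u₀ b →
      tripleNorm μ Ω t₀ (fun x t => nonlocalT μ Ω K g a x t - nonlocalT μ Ω K g b x t) ≤
        q * tripleNorm μ Ω t₀ (fun x t => a x t - b x t) := by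
    intro a b ha hb
    exact tripleNorm_le' H.ht₀.le (H.contract hgC hC ha hb)
  -- geometric decay of increments
  set D0 : ℝ := tripleNorm μ Ω t₀ (fun x t => ws 1 x t - ws 0 x t) with hD0def
  have hD0nn : 0 ≤ D0 := hDnn _ _ (hwsX 1) (hwsX 0)
  have hgeo : ∀ n, tripleNorm μ Ω t₀ (fun x t => ws (n + 1) x t - ws n x t) ≤ q ^ n * D0 := by
    intro n
    induction n with
    | zero => simp [hD0def]
    | succ n ih =>
      have h1 : tripleNorm μ Ω t₀ (fun x t => ws (n + 2) x t - ws (n + 1) x t) ≤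
          q * tripleNorm μ Ω t₀ (fun x t => ws (n + 1) x t - ws n x t) := by
        have := hcontr (ws (n + 1)) (ws n) (hwsX (n + 1)) (hwsX n)
        rwa [← hwssucc (n + 1), ← hwssucc n] at this
      calc tripleNorm μ Ω t₀ (fun x t => ws (n + 2) x t - ws (n + 1) x t)
          ≤ q * tripleNorm μ Ω t₀ (fun x t => ws (n + 1) x t - ws n x t) := h1
        _ ≤ q * (q ^ n * D0) := mul_le_mul_of_nonneg_left ih hq0
        _ = q ^ (n + 1) * D0 := by ring
  have hdper : ∀ n, ∀ t ∈ Icc (0:ℝ) t₀,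
      ∫ x in Ω, |ws (n + 1) x t - ws n x t| ∂μ ≤ q ^ n * D0 := by
    intro n t ht
    exact le_trans (hDper _ _ (hwsX (n + 1)) (hwsX n) t ht) (hgeo n)
  -- the limit function
  set u : G → ℝ → ℝ := fun x t =>
    if x ∈ Ω then Filter.liminf (fun n => ws n x t) Filter.atTop else g x t with hudef
  have humeas : Measurable (fun p : G × ℝ => u p.1 p.2) := by
    apply Measurable.ite (measurable_fst H.hΩm) _ hgmeas
    exact Measurable.liminf fun n => (hwsX n).1.1
  -- summability of increments, pointwise a.e., for each fixed t
  have hsect : ∀ n (t : ℝ), Measurable fun x : G => ws n x t := by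
    intro n t
    exact (hwsX n).1.1.comp (measurable_id.prodMk measurable_const)
  have hofm : ∀ n (t : ℝ), Measurable fun x : G => ENNReal.ofReal |ws (n + 1) x t - ws n x t| :=
    fun n t => (((hsect (n+1) t).sub (hsect n t)).abs).ennreal_ofReal
  have hper : ∀ n, ∀ t ∈ Icc (0:ℝ) t₀,
      ∫⁻ x in Ω, ENNReal.ofReal |ws (n + 1) x t - ws n x t| ∂μ ≤
        ENNReal.ofReal (q ^ n * D0) := by
    intro n t ht
    have hint : IntegrableOn (fun x => ws (n + 1) x t - ws n x t) Ω μ :=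
      ((hwsX (n+1)).1.2.2.1 t ht).sub ((hwsX n).1.2.2.1 t ht)
    have h2 := ofReal_integral_norm_eq_lintegral_enorm hint
    calc ∫⁻ x in Ω, ENNReal.ofReal |ws (n + 1) x t - ws n x t| ∂μ
        = ∫⁻ x in Ω, (‖ws (n + 1) x t - ws n x t‖₊ : ENNReal) ∂μ := by
          apply lintegral_congr
          intro x
          rw [← enorm_eq_nnnorm, ← ofReal_norm, Real.norm_eq_abs]
      _ = ENNReal.ofReal (∫ x in Ω, ‖ws (n + 1) x t - ws n x t‖ ∂μ) := h2.symm
      _ ≤ ENNReal.ofReal (q ^ n * D0) := by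
          apply ENNReal.ofReal_le_ofReal
          have := hdper n t ht
          simpa [Real.norm_eq_abs] using this
  have hsumgeo : Summable (fun n : ℕ => q ^ n * D0) :=
    (summable_geometric_of_lt_one hq0 hsmall).mul_right D0
  have hsummable : ∀ t ∈ Icc (0:ℝ) t₀, ∀ᵐ x ∂(μ.restrict Ω),
      Summable (fun n => |ws (n + 1) x t - ws n x t|) := by
    intro t ht
    have hlim : ∫⁻ x in Ω, ∑' n, ENNReal.ofReal |ws (n + 1) x t - ws n x t| ∂μ ≠ ⊤ := by
      rw [lintegral_tsum (fun n => (hofm n t).aemeasurable)]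
      refine ne_top_of_le_ne_top ?_ (ENNReal.tsum_le_tsum (fun n => hper n t ht))
      rw [← ENNReal.ofReal_tsum_of_nonneg (fun n => mul_nonneg (pow_nonneg hq0 n) hD0nn)
        hsumgeo]
      exact ENNReal.ofReal_lt_top.ne
    have hmeas : Measurable fun x : G => ∑' n, ENNReal.ofReal |ws (n + 1) x t - ws n x t| :=
      Measurable.ennreal_tsum fun n => hofm n t
    filter_upwards [ae_lt_top hmeas hlim] with x hx
    have := ENNReal.summable_toReal hx.ne
    apply this.congr
    intro n
    rw [ENNReal.toReal_ofReal (abs_nonneg _)]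
  -- the tail estimates
  have hq1 : (0:ℝ) < 1 - q := by linarith
  set τ : ℕ → ℝ := fun n => q ^ n * (D0 * (1 - q)⁻¹) with hτdef
  have hτnn : ∀ n, 0 ≤ τ n := fun n => mul_nonneg (pow_nonneg hq0 n)
    (mul_nonneg hD0nn (inv_nonneg.2 hq1.le))
  have hτ0 : Tendsto τ atTop (nhds 0) := by
    have := (tendsto_pow_atTop_nhds_zero_of_lt_one hq0 hsmall).mul_const (D0 * (1 - q)⁻¹)
    simpa using this
  have htail : ∀ t ∈ Icc (0:ℝ) t₀, ∀ᵐ x ∂(μ.restrict Ω), ∀ n,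
      |u x t - ws n x t| ≤ ∑' k, |ws (k + n + 1) x t - ws (k + n) x t| := by
    intro t ht
    filter_upwards [hsummable t ht, ae_restrict_mem H.hΩm] with x hsx hx
    have hsx' : Summable (fun n => ws (n + 1) x t - ws n x t) :=
      Summable.of_norm (by simpa [Real.norm_eq_abs] using hsx)
    have hps : ∀ n, ∑ k ∈ Finset.range n, (ws (k + 1) x t - ws k x t) =
        ws n x t - ws 0 x t := fun n => Finset.sum_range_sub (f := fun k => ws k x t) n
    have hTend : Tendsto (fun n => ws n x t) atTop
        (nhds (ws 0 x t + ∑' k, (ws (k + 1) x t - ws k x t))) := by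
      have h1 := hsx'.hasSum.tendsto_sum_nat
      have h2 : Tendsto (fun n => ws n x t - ws 0 x t) atTop
          (nhds (∑' k, (ws (k + 1) x t - ws k x t))) := by
        apply h1.congr
        intro n
        exact hps n
      have := h2.add_const (ws 0 x t)
      simp only [sub_add_cancel] at this
      convert this using 2
      ring
    have hueq : u x t = ws 0 x t + ∑' k, (ws (k + 1) x t - ws k x t) := by
      rw [hudef]
      simp only [if_pos hx]
      exact hTend.liminf_eq
    intro n
    have hsplit := Summable.sum_add_tsum_nat_add (f := fun k => ws (k + 1) x t - ws k x t) n hsx'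
    have hdiff : u x t - ws n x t = ∑' k, (ws (k + n + 1) x t - ws (k + n) x t) := by
      rw [hueq]
      have : ws 0 x t + ∑' k, (ws (k + 1) x t - ws k x t) - ws n x t =
          (∑' k, (ws (k + 1) x t - ws k x t)) -
            ∑ k ∈ Finset.range n, (ws (k + 1) x t - ws k x t) := by
        rw [hps n]; ring
      rw [this]
      have hsplit' : (∑ k ∈ Finset.range n, (ws (k + 1) x t - ws k x t)) +
          ∑' k, (ws (k + n + 1) x t - ws (k + n) x t) = ∑' k, (ws (k + 1) x t - ws k x t) :=
        Summable.sum_add_tsum_nat_add n hsx'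
      linarith [hsplit']
    rw [hdiff]
    have hsummable2 : Summable (fun k => |ws (k + n + 1) x t - ws (k + n) x t|) := by
      have := (summable_nat_add_iff (f := fun k => |ws (k + 1) x t - ws k x t|) n).2 hsx
      exact this
    calc |∑' k, (ws (k + n + 1) x t - ws (k + n) x t)| ≤
        ∑' k, ‖ws (k + n + 1) x t - ws (k + n) x t‖ := by
          rw [← Real.norm_eq_abs]
          apply norm_tsum_le_tsum_norm
          simpa [Real.norm_eq_abs] using hsummable2
      _ = ∑' k, |ws (k + n + 1) x t - ws (k + n) x t| := by
          apply tsum_congr; intro k; rw [Real.norm_eq_abs]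
  have hE : ∀ t ∈ Icc (0:ℝ) t₀, ∀ n,
      ∫⁻ x in Ω, ENNReal.ofReal |u x t - ws n x t| ∂μ ≤ ENNReal.ofReal (τ n) := by
    intro t ht n
    have hgeo2 : Summable (fun k : ℕ => q ^ (k + n) * D0) := by
      have := (summable_nat_add_iff (f := fun k => q ^ k * D0) n).2 hsumgeo
      exact this
    calc ∫⁻ x in Ω, ENNReal.ofReal |u x t - ws n x t| ∂μ
        ≤ ∫⁻ x in Ω, ∑' k, ENNReal.ofReal |ws (k + n + 1) x t - ws (k + n) x t| ∂μ := by
          apply lintegral_mono_ae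
          filter_upwards [htail t ht, hsummable t ht] with x hx hsx
          have hsummable2 : Summable (fun k => |ws (k + n + 1) x t - ws (k + n) x t|) :=
            (summable_nat_add_iff (f := fun k => |ws (k + 1) x t - ws k x t|) n).2 hsx
          calc ENNReal.ofReal |u x t - ws n x t|
              ≤ ENNReal.ofReal (∑' k, |ws (k + n + 1) x t - ws (k + n) x t|) :=
                ENNReal.ofReal_le_ofReal (hx n)
            _ = ∑' k, ENNReal.ofReal |ws (k + n + 1) x t - ws (k + n) x t| :=
                ENNReal.ofReal_tsum_of_nonneg (fun k => abs_nonneg _) hsummable2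
      _ = ∑' k, ∫⁻ x in Ω, ENNReal.ofReal |ws (k + n + 1) x t - ws (k + n) x t| ∂μ :=
          lintegral_tsum (fun k => (hofm (k + n) t).aemeasurable)
      _ ≤ ∑' k, ENNReal.ofReal (q ^ (k + n) * D0) :=
          ENNReal.tsum_le_tsum (fun k => hper (k + n) t ht)
      _ = ENNReal.ofReal (∑' k, q ^ (k + n) * D0) :=
          (ENNReal.ofReal_tsum_of_nonneg (fun k => mul_nonneg (pow_nonneg hq0 _) hD0nn)
            hgeo2).symm
      _ = ENNReal.ofReal (τ n) := by
          congr 1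
          have h1 : ∀ k, q ^ (k + n) * D0 = q ^ n * D0 * q ^ k := by
            intro k; rw [pow_add]; ring
          rw [tsum_congr h1, tsum_mul_left, tsum_geometric_of_lt_one hq0 hsmall, hτdef]
          ring
  have humeas_sect : ∀ t : ℝ, Measurable fun x => u x t :=
    fun t => humeas.comp (measurable_id.prodMk measurable_const)
  have huint : ∀ t ∈ Icc (0:ℝ) t₀, IntegrableOn (fun x => u x t) Ω μ := by
    intro t ht
    have hd : IntegrableOn (fun x => u x t - ws 0 x t) Ω μ := by
      refine ⟨((humeas_sect t).sub (hsect 0 t)).aestronglyMeasurable.restrict, ?_⟩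
      rw [hasFiniteIntegral_def]
      calc ∫⁻ x in Ω, (‖u x t - ws 0 x t‖₊ : ENNReal) ∂μ
          = ∫⁻ x in Ω, ENNReal.ofReal |u x t - ws 0 x t| ∂μ := by
            apply lintegral_congr; intro x
            rw [← enorm_eq_nnnorm, ← ofReal_norm, Real.norm_eq_abs]
        _ ≤ ENNReal.ofReal (τ 0) := hE t ht 0
        _ < ⊤ := ENNReal.ofReal_lt_top
    have := hd.add ((hwsX 0).1.2.2.1 t ht)
    apply this.congr
    filter_upwards with x
    show u x t - ws 0 x t + ws 0 x t = u x t
    ring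
  have hL1 : ∀ t ∈ Icc (0:ℝ) t₀, ∀ n, ∫ x in Ω, |u x t - ws n x t| ∂μ ≤ τ n := by
    intro t ht n
    rw [integral_eq_lintegral_of_nonneg_ae (f := fun x => |u x t - ws n x t|) (by filter_upwards with x using abs_nonneg _)
      (((humeas_sect t).sub (hsect n t)).abs.aestronglyMeasurable.restrict)]
    exact ENNReal.toReal_le_of_le_ofReal (hτnn n) (hE t ht n)
  have hL1' : ∀ t ∈ Icc (0:ℝ) t₀, ∀ n, ∫ x in Ω, |ws n x t - u x t| ∂μ ≤ τ n := by
    intro t ht n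
    have : ∫ x in Ω, |ws n x t - u x t| ∂μ = ∫ x in Ω, |u x t - ws n x t| ∂μ := by
      apply integral_congr_ae
      filter_upwards with x
      exact abs_sub_comm _ _
    rw [this]; exact hL1 t ht n
  -- u belongs to X₀
  have hws_at0 : ∀ n, ∀ x ∈ Ω, ws n x 0 = w₀ x 0 := by
    intro n
    induction n with
    | zero => intro x _; rfl
    | succ n ih =>
      intro x hx
      rw [hwssucc n, H.T_eq_on hx, intervalIntegral.integral_same, add_zero]
      exact ih x hx
  have huX : MemX0 μ Ω g t₀ u₀ u := by
    refine ⟨⟨humeas, ?_, huint, ?_⟩, ?_⟩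
    · intro x hx t _
      simp only [hudef, if_neg hx]
    · -- L¹-continuity in time via 3ε
      intro s hs
      rw [Metric.tendsto_nhds]
      intro ε hε
      obtain ⟨n, hn⟩ : ∃ n, τ n < ε / 4 :=
        ((hτ0.eventually (gt_mem_nhds (by linarith : (0:ℝ) < ε / 4))).exists)
      have hev := ((hwsX n).1.2.2.2 s hs).eventually
        (gt_mem_nhds (show (0:ℝ) < ε / 4 by linarith))
      filter_upwards [hev, self_mem_nhdsWithin] with t hψ htIcc
      have hint1 : IntegrableOn (fun x => u x t - ws n x t) Ω μ :=
        (huint t htIcc).sub ((hwsX n).1.2.2.1 t htIcc)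
      have hint2 : IntegrableOn (fun x => ws n x t - ws n x s) Ω μ :=
        ((hwsX n).1.2.2.1 t htIcc).sub ((hwsX n).1.2.2.1 s hs)
      have hint3 : IntegrableOn (fun x => ws n x s - u x s) Ω μ :=
        ((hwsX n).1.2.2.1 s hs).sub (huint s hs)
      have htri : ∫ x in Ω, |u x t - u x s| ∂μ ≤
          (∫ x in Ω, |u x t - ws n x t| ∂μ) + ((∫ x in Ω, |ws n x t - ws n x s| ∂μ) +
            ∫ x in Ω, |ws n x s - u x s| ∂μ) := by
        calc ∫ x in Ω, |u x t - u x s| ∂μ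
            ≤ ∫ x in Ω, (|u x t - ws n x t| +
                (|ws n x t - ws n x s| + |ws n x s - u x s|)) ∂μ := by
              apply integral_mono ((huint t htIcc).sub (huint s hs)).abs
                (hint1.abs.add (hint2.abs.add hint3.abs))
              intro x
              show |u x t - u x s| ≤
                |u x t - ws n x t| + (|ws n x t - ws n x s| + |ws n x s - u x s|)
              have h1 : u x t - u x s = (u x t - ws n x t) + ((ws n x t - ws n x s) +
                  (ws n x s - u x s)) := by ring
              rw [h1]
              exact le_trans (abs_add_le _ _) (by gcongr; exact abs_add_le _ _)
          _ = _ :=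
              (integral_add hint1.abs (hint2.abs.add hint3.abs)).trans
                (congrArg (fun z => (∫ x in Ω, |u x t - ws n x t| ∂μ) + z)
                  (integral_add hint2.abs hint3.abs))
      have hnn : 0 ≤ ∫ x in Ω, |u x t - u x s| ∂μ := integral_nonneg fun x => abs_nonneg _
      rw [Real.dist_eq, sub_zero, abs_of_nonneg hnn]
      have := hL1 t htIcc n
      have := hL1' s hs n
      linarith [hL1 t htIcc n, hL1' s hs n, hψ]
    · -- initial value
      filter_upwards [ae_restrict_mem H.hΩm, hu₀'ae] with x hx h2
      have : ∀ n, ws n x 0 = w₀ x 0 := fun n => hws_at0 n x hx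
      rw [hudef]
      simp only [if_pos hx]
      have hconst : (fun n => ws n x 0) = fun _ => w₀ x 0 := funext fun n => hws_at0 n x hx
      rw [hconst, Filter.liminf_const]
      simp only [hw₀def, if_pos hx]
      exact h2.symm
  -- the fixed-point property
  have hTuX : MemX0 μ Ω g t₀ u₀ (nonlocalT μ Ω K g u) := H.T_memX0 hgmeas hgC hC huX
  have htrip : ∀ n, tripleNorm μ Ω t₀ (fun x t => ws n x t - u x t) ≤ τ n := by
    intro n
    exact tripleNorm_le' H.ht₀.le (fun t ht => hL1' t ht n)
  refine ⟨u, huX, ?_⟩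
  intro t ht
  have hzero : ∫ x in Ω, |u x t - nonlocalT μ Ω K g u x t| ∂μ = 0 := by
    have hub : ∀ n, ∫ x in Ω, |u x t - nonlocalT μ Ω K g u x t| ∂μ ≤ τ (n + 1) + q * τ n := by
      intro n
      have hintu : IntegrableOn (fun x => u x t) Ω μ := huint t ht
      have hintw : IntegrableOn (fun x => ws (n + 1) x t) Ω μ := (hwsX (n + 1)).1.2.2.1 t ht
      have hintT : IntegrableOn (fun x => nonlocalT μ Ω K g u x t) Ω μ := hTuX.1.2.2.1 t ht
      have h2 : ∫ x in Ω, |ws (n + 1) x t - nonlocalT μ Ω K g u x t| ∂μ ≤ q * τ n := by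
        have hc := H.contract hgC hC (hwsX n) huX t ht
        rw [← hwssucc n] at hc
        calc ∫ x in Ω, |ws (n + 1) x t - nonlocalT μ Ω K g u x t| ∂μ
            ≤ q * tripleNorm μ Ω t₀ (fun x t => ws n x t - u x t) := hc
          _ ≤ q * τ n := mul_le_mul_of_nonneg_left (htrip n) hq0
      calc ∫ x in Ω, |u x t - nonlocalT μ Ω K g u x t| ∂μ
          ≤ ∫ x in Ω, (|u x t - ws (n + 1) x t| +
              |ws (n + 1) x t - nonlocalT μ Ω K g u x t|) ∂μ := by
            apply integral_mono (hintu.sub hintT).abs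
              ((hintu.sub hintw).abs.add (hintw.sub hintT).abs)
            intro x
            show |u x t - nonlocalT μ Ω K g u x t| ≤
              |u x t - ws (n + 1) x t| + |ws (n + 1) x t - nonlocalT μ Ω K g u x t|
            have h1 : u x t - nonlocalT μ Ω K g u x t = (u x t - ws (n + 1) x t) +
                (ws (n + 1) x t - nonlocalT μ Ω K g u x t) := by ring
            rw [h1]
            exact abs_add_le _ _
        _ = (∫ x in Ω, |u x t - ws (n + 1) x t| ∂μ) +
            ∫ x in Ω, |ws (n + 1) x t - nonlocalT μ Ω K g u x t| ∂μ :=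
            integral_add (hintu.sub hintw).abs (hintw.sub hintT).abs
        _ ≤ τ (n + 1) + q * τ n := add_le_add (hL1 t ht (n + 1)) h2
    have hlim2 : Tendsto (fun n => τ (n + 1) + q * τ n) atTop (nhds 0) := by
      have ha : Tendsto (fun n => τ (n + 1)) atTop (nhds 0) :=
        hτ0.comp (tendsto_add_atTop_nat 1)
      have hb : Tendsto (fun n => q * τ n) atTop (nhds (q * 0)) := hτ0.const_mul q
      have := ha.add hb
      simpa using this
    have hle0 : ∫ x in Ω, |u x t - nonlocalT μ Ω K g u x t| ∂μ ≤ 0 :=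
      ge_of_tendsto' hlim2 hub
    exact le_antisymm hle0 (integral_nonneg fun x => abs_nonneg _)
  have hinteq : IntegrableOn (fun x => u x t - nonlocalT μ Ω K g u x t) Ω μ :=
    (huint t ht).sub (hTuX.1.2.2.1 t ht)
  have hzae := (integral_eq_zero_iff_of_nonneg_ae
    (by filter_upwards with x using abs_nonneg _) hinteq.abs).1 hzero
  filter_upwards [hzae] with x hx
  have : |u x t - nonlocalT μ Ω K g u x t| = 0 := hx
  have h2 := abs_eq_zero.1 this
  linarith [h2]

theorem NLS.unique (H : NLS μ Ω F' K M t₀) {C : ℝ} {u₀ : G → ℝ} {u u' : G → ℝ → ℝ}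
    (hgC : ∀ x t, |g x t| ≤ C) (hC : 0 ≤ C)
    (hsmall : M * ((μ Ω).toReal + (μ F').toReal) * t₀ < 1)
    (hu : MemX0 μ Ω g t₀ u₀ u) (hu' : MemX0 μ Ω g t₀ u₀ u')
    (hfu : ∀ t ∈ Icc (0:ℝ) t₀,
      (fun x => u x t) =ᵐ[μ.restrict Ω] fun x => nonlocalT μ Ω K g u x t)
    (hfu' : ∀ t ∈ Icc (0:ℝ) t₀,
      (fun x => u' x t) =ᵐ[μ.restrict Ω] fun x => nonlocalT μ Ω K g u' x t) :
    ∀ t ∈ Icc (0:ℝ) t₀, (fun x => u' x t) =ᵐ[μ.restrict Ω] fun x => u x t := by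
  set q : ℝ := M * ((μ Ω).toReal + (μ F').toReal) * t₀ with hqdef
  have hq0 : 0 ≤ q := mul_nonneg (mul_nonneg H.hM.le
    (add_nonneg ENNReal.toReal_nonneg ENNReal.toReal_nonneg)) H.ht₀.le
  have h0mem : (0:ℝ) ∈ Icc (0:ℝ) t₀ := left_mem_Icc.2 H.ht₀.le
  have hbdd : BddAbove ((fun t => ∫ x in Ω, |u' x t - u x t| ∂μ) '' Icc (0:ℝ) t₀) :=
    bddAbove_sub hu'.1.2.2.1 hu'.1.2.2.2 hu.1.2.2.1 hu.1.2.2.2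
  set N : ℝ := tripleNorm μ Ω t₀ (fun x t => u' x t - u x t) with hNdef
  have hNper : ∀ t ∈ Icc (0:ℝ) t₀, ∫ x in Ω, |u' x t - u x t| ∂μ ≤ N := fun t ht =>
    le_tripleNorm' hbdd ht
  have hN0 : 0 ≤ N :=
    le_trans (integral_nonneg fun x => abs_nonneg _) (hNper 0 h0mem)
  have hcon : ∀ t ∈ Icc (0:ℝ) t₀, ∫ x in Ω, |u' x t - u x t| ∂μ ≤ q * N := by
    intro t ht
    have he : ∫ x in Ω, |u' x t - u x t| ∂μ =
        ∫ x in Ω, |nonlocalT μ Ω K g u' x t - nonlocalT μ Ω K g u x t| ∂μ := by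
      apply integral_congr_ae
      filter_upwards [hfu' t ht, hfu t ht] with x h1 h2
      rw [show u' x t = nonlocalT μ Ω K g u' x t from h1,
        show u x t = nonlocalT μ Ω K g u x t from h2]
    rw [he]
    exact H.contract hgC hC hu' hu t ht
  have hNleq : N ≤ q * N := tripleNorm_le' H.ht₀.le hcon
  have hNzero : N ≤ 0 := by nlinarith
  intro t ht
  have h0 : ∫ x in Ω, |u' x t - u x t| ∂μ = 0 :=
    le_antisymm (le_trans (hNper t ht) hNzero) (integral_nonneg fun x => abs_nonneg _)
  have hint : IntegrableOn (fun x => u' x t - u x t) Ω μ :=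
    (hu'.1.2.2.1 t ht).sub (hu.1.2.2.1 t ht)
  have hzae := (integral_eq_zero_iff_of_nonneg_ae
    (by filter_upwards with x using abs_nonneg _) hint.abs).1 h0
  filter_upwards [hzae] with x hx
  have : |u' x t - u x t| = 0 := hx
  have h2 := abs_eq_zero.1 this
  linarith [h2]

end Core

/-- If `M(μ(Ω)+μ(F′)) t₀ < 1` then `𝔗` maps `X_{t₀,u₀}` into itself, is a strict
contraction there (with contraction constant `M(μ(Ω)+μ(F′)) t₀` for `|||·|||`),
and hence has a unique fixed point in `X_{t₀,u₀}`. -/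
theorem stmt1 {G : Type*} [MeasurableSpace G] (μ : Measure G) (Ω F' : Set G)
    (hΩm : MeasurableSet Ω) (hF'm : MeasurableSet F')
    (hΩfin : μ Ω < ⊤) (hF'fin : μ F' < ⊤)
    (K : G → G → ℝ) (hKmeas : Measurable (fun p : G × G => K p.1 p.2))
    (hKnonneg : ∀ x y, 0 ≤ K x y)
    (hKsupp : ∀ x y, (x, y) ∉ Ω ×ˢ F' → K x y = 0)
    (M : ℝ) (hM : 0 < M) (hKle : ∀ x y, K x y ≤ M)
    (g : G → ℝ → ℝ) (hgmeas : Measurable (fun p : G × ℝ => g p.1 p.2))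
    (hgbdd : ∃ C, ∀ x t, |g x t| ≤ C)
    (u₀ : G → ℝ) (hu₀ : IntegrableOn u₀ Ω μ)
    (t₀ : ℝ) (ht₀ : 0 < t₀)
    (hsmall : M * ((μ Ω).toReal + (μ F').toReal) * t₀ < 1) :
    (∀ w, MemX0 μ Ω g t₀ u₀ w → MemX0 μ Ω g t₀ u₀ (nonlocalT μ Ω K g w)) ∧
    (∀ w v, MemX0 μ Ω g t₀ u₀ w → MemX0 μ Ω g t₀ u₀ v →
      tripleNorm μ Ω t₀
          (fun x t => nonlocalT μ Ω K g w x t - nonlocalT μ Ω K g v x t) ≤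
        M * ((μ Ω).toReal + (μ F').toReal) * t₀ *
          tripleNorm μ Ω t₀ (fun x t => w x t - v x t)) ∧
    (∃ u, MemX0 μ Ω g t₀ u₀ u ∧
      (∀ t ∈ Icc (0:ℝ) t₀,
        (fun x => u x t) =ᵐ[μ.restrict Ω] fun x => nonlocalT μ Ω K g u x t) ∧
      (∀ u', MemX0 μ Ω g t₀ u₀ u' →
        (∀ t ∈ Icc (0:ℝ) t₀,
          (fun x => u' x t) =ᵐ[μ.restrict Ω] fun x => nonlocalT μ Ω K g u' x t) →
        ∀ t ∈ Icc (0:ℝ) t₀, (fun x => u' x t) =ᵐ[μ.restrict Ω] fun x => u x t)) := by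
  obtain ⟨C₀, hC₀⟩ := hgbdd
  have hgC : ∀ x t, |g x t| ≤ max C₀ 0 := fun x t => le_trans (hC₀ x t) (le_max_left _ _)
  have hC : (0:ℝ) ≤ max C₀ 0 := le_max_right _ _
  have H : NLS μ Ω F' K M t₀ :=
    ⟨hΩm, hF'm, hΩfin, hF'fin, hKmeas, hKnonneg, hKsupp, hM, hKle, ht₀⟩
  obtain ⟨u, huX, hfix⟩ := H.existence hgmeas hgC hC hu₀ hsmall
  refine ⟨fun w hw => H.T_memX0 hgmeas hgC hC hw,
    fun w v hw hv => tripleNorm_le' H.ht₀.le (H.contract hgC hC hw hv),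
    u, huX, hfix, fun u' hu' hfix' => H.unique hgC hC hsmall huX hu' hfix hfix'⟩
end

section
/- Suppose u₀ ≥ 0 on Ω and g ≥ 0 on (G ∖ Ω) × (0,T]. If u is a supersolution of the nonlocal Dirichlet problem with data (u₀, g), then u(x,t) ≥ 0 for all (x,t) ∈ cl(Ω) × [0,T]. -/
open MeasureTheory Set

/-- `u` is a supersolution of the nonlocal Dirichlet problem with data `(u₀, g)`:
bounded, measurable, continuous on `cl(Ω) × [0,T]`, differentiable in `t` on `(0,T]`
for each `x ∈ Ω` with `∂ₜu(x,t) ≥ ∫ K(x,y)(u(y,t) − u(x,t)) dμ(y)`, `u ≥ g` off `Ω`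
and `u(·,0) ≥ u₀` on `Ω`. -/
def IsSupersolutionNL {G : Type*} [MetricSpace G] [MeasurableSpace G]
    (μ : Measure G) (Ω : Set G) (K : G → G → ℝ) (T : ℝ)
    (u₀ : G → ℝ) (g : G → ℝ → ℝ) (u : G → ℝ → ℝ) : Prop :=
  (∃ C, ∀ x t, |u x t| ≤ C) ∧
  Measurable (fun p : G × ℝ => u p.1 p.2) ∧
  ContinuousOn (fun p : G × ℝ => u p.1 p.2) (closure Ω ×ˢ Icc 0 T) ∧
  (∀ x ∈ Ω, ∀ t ∈ Ioc (0:ℝ) T, ∃ d : ℝ,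
    HasDerivWithinAt (fun s => u x s) d (Icc (0:ℝ) T) t ∧
    (∫ y, K x y * (u y t - u x t) ∂μ) ≤ d) ∧
  (∀ x ∉ Ω, ∀ t ∈ Ioc (0:ℝ) T, g x t ≤ u x t) ∧
  (∀ x ∈ Ω, u₀ x ≤ u x 0)

/-- `u` is a subsolution: as for supersolutions, with all inequalities reversed. -/
def IsSubsolutionNL {G : Type*} [MetricSpace G] [MeasurableSpace G]
    (μ : Measure G) (Ω : Set G) (K : G → G → ℝ) (T : ℝ)
    (u₀ : G → ℝ) (g : G → ℝ → ℝ) (u : G → ℝ → ℝ) : Prop :=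
  (∃ C, ∀ x t, |u x t| ≤ C) ∧
  Measurable (fun p : G × ℝ => u p.1 p.2) ∧
  ContinuousOn (fun p : G × ℝ => u p.1 p.2) (closure Ω ×ˢ Icc 0 T) ∧
  (∀ x ∈ Ω, ∀ t ∈ Ioc (0:ℝ) T, ∃ d : ℝ,
    HasDerivWithinAt (fun s => u x s) d (Icc (0:ℝ) T) t ∧
    d ≤ ∫ y, K x y * (u y t - u x t) ∂μ) ∧
  (∀ x ∉ Ω, ∀ t ∈ Ioc (0:ℝ) T, u x t ≤ g x t) ∧
  (∀ x ∈ Ω, u x 0 ≤ u₀ x)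

/-- `u` is a solution: simultaneously a super- and a subsolution. -/
def IsSolutionNL {G : Type*} [MetricSpace G] [MeasurableSpace G]
    (μ : Measure G) (Ω : Set G) (K : G → G → ℝ) (T : ℝ)
    (u₀ : G → ℝ) (g : G → ℝ → ℝ) (u : G → ℝ → ℝ) : Prop :=
  IsSupersolutionNL μ Ω K T u₀ g u ∧ IsSubsolutionNL μ Ω K T u₀ g u

/-- Nonnegativity of supersolutions with nonnegative data. -/
theorem stmt3 {G : Type*} [MetricSpace G] [MeasurableSpace G] [BorelSpace G]
    (μ : Measure G) (Ω : Set G) (hΩo : IsOpen Ω) (hΩne : Ω.Nonempty)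
    (hΩc : IsCompact (closure Ω))
    (K : G → G → ℝ) (hK0 : ∀ x y, 0 ≤ K x y)
    (hKmeas : Measurable (fun p : G × G => K p.1 p.2))
    (hKint : ∀ x ∈ Ω, Integrable (fun y => K x y) μ)
    (T : ℝ) (hT : 0 < T)
    (g : G → ℝ → ℝ) (hgbdd : ∃ C, ∀ x ∉ Ω, ∀ t ∈ Ioc (0:ℝ) T, |g x t| ≤ C)
    (u₀ : G → ℝ) (hu₀bdd : ∃ C, ∀ x ∈ Ω, |u₀ x| ≤ C)
    (hu₀pos : ∀ x ∈ Ω, 0 ≤ u₀ x)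
    (hgpos : ∀ x ∉ Ω, ∀ t ∈ Ioc (0:ℝ) T, 0 ≤ g x t)
    (u : G → ℝ → ℝ) (hu : IsSupersolutionNL μ Ω K T u₀ g u) :
    ∀ x ∈ closure Ω, ∀ t ∈ Icc (0:ℝ) T, 0 ≤ u x t := by
  open Topology Filter in
  obtain ⟨_, hmeas, hcont, hder, hbc, hic⟩ := hu
  have hupos : ∀ x ∉ Ω, ∀ t ∈ Ioc (0:ℝ) T, 0 ≤ u x t := fun x hx t ht =>
    le_trans (hgpos x hx t ht) (hbc x hx t ht)
  intro x hx t ht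
  -- main claim: for each ε > 0, u + ε·t ≥ 0 on closure Ω × [0,T]
  have key : ∀ ε : ℝ, 0 < ε → ∀ p ∈ closure Ω ×ˢ Icc (0:ℝ) T, 0 ≤ u p.1 p.2 + ε * p.2 := by
    intro ε hε
    set S : Set (G × ℝ) := closure Ω ×ˢ Icc (0:ℝ) T with hS
    have hScomp : IsCompact S := hΩc.prod isCompact_Icc
    have hSne : S.Nonempty := by
      obtain ⟨z, hz⟩ := hΩne
      exact ⟨(z, 0), subset_closure hz, le_refl 0, le_of_lt hT⟩
    have hvcont : ContinuousOn (fun p : G × ℝ => u p.1 p.2 + ε * p.2) S :=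
      hcont.add ((continuous_const.mul continuous_snd).continuousOn)
    obtain ⟨p₀, hp₀S, hp₀min⟩ := hScomp.exists_isMinOn hSne hvcont
    obtain ⟨x₀, t₀⟩ := p₀
    obtain ⟨hx₀, ht₀⟩ := hp₀S
    suffices h : 0 ≤ u x₀ t₀ + ε * t₀ by
      intro p hp; exact le_trans h (hp₀min hp)
    by_contra hneg
    push_neg at hneg
    have ht₀0 : (0:ℝ) ≤ t₀ := ht₀.1
    have hut₀ : u x₀ t₀ < 0 := by nlinarith
    have hx₀Ω : x₀ ∈ Ω := by
      by_contra hx₀Ω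
      rcases eq_or_lt_of_le ht₀0 with h0 | h0
      · -- t₀ = 0 : continuity from positive times
        haveI hne : (𝓝[Ioc (0:ℝ) T] (0:ℝ)).NeBot := by
          refine mem_closure_iff_nhdsWithin_neBot.mp ?_
          rw [closure_Ioc hT.ne]
          exact ⟨le_refl 0, le_of_lt hT⟩
        have hmap : Filter.Tendsto (fun s : ℝ => ((x₀, s) : G × ℝ))
            (𝓝[Ioc (0:ℝ) T] (0:ℝ)) (𝓝[S] (x₀, 0)) := by
          apply tendsto_nhdsWithin_of_tendsto_nhds_of_eventually_within
          · exact ((continuous_const.prodMk continuous_id).tendsto 0).mono_left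
              nhdsWithin_le_nhds
          · filter_upwards [self_mem_nhdsWithin] with s hs
            exact ⟨hx₀, le_of_lt hs.1, hs.2⟩
        have hten : Filter.Tendsto (fun s => u x₀ s) (𝓝[Ioc (0:ℝ) T] (0:ℝ)) (𝓝 (u x₀ 0)) :=
          (hcont (x₀, 0) ⟨hx₀, le_refl 0, le_of_lt hT⟩).tendsto.comp hmap
        have h00 : 0 ≤ u x₀ 0 := by
          refine ge_of_tendsto hten ?_
          filter_upwards [self_mem_nhdsWithin] with s hs
          exact hupos x₀ hx₀Ω s hs
        rw [← h0] at hut₀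
        linarith
      · exact absurd (hupos x₀ hx₀Ω t₀ ⟨h0, ht₀.2⟩) (not_le.mpr hut₀)
    have ht₀pos : 0 < t₀ := by
      rcases eq_or_lt_of_le ht₀0 with h0 | h0
      · exfalso; rw [← h0] at hut₀
        linarith [le_trans (hu₀pos x₀ hx₀Ω) (hic x₀ hx₀Ω)]
      · exact h0
    obtain ⟨d, hd, hdge⟩ := hder x₀ hx₀Ω t₀ ⟨ht₀pos, ht₀.2⟩
    -- the integral is nonnegative
    have hint : 0 ≤ ∫ y, K x₀ y * (u y t₀ - u x₀ t₀) ∂μ := by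
      refine integral_nonneg fun y => ?_
      refine mul_nonneg (hK0 x₀ y) (sub_nonneg.mpr ?_)
      by_cases hy : y ∈ closure Ω
      · have := hp₀min (show ((y, t₀) : G × ℝ) ∈ S from ⟨hy, ht₀⟩)
        simpa using this
      · have : 0 ≤ u y t₀ := hupos y (fun h => hy (subset_closure h)) t₀ ⟨ht₀pos, ht₀.2⟩
        linarith
    -- d + ε ≤ 0 via left difference quotients
    have hdle : d + ε ≤ 0 := by
      have hlin : HasDerivWithinAt (fun s : ℝ => ε * s) ε (Icc (0:ℝ) T) t₀ := by
        simpa using (hasDerivWithinAt_id t₀ (Icc (0:ℝ) T)).const_mul ε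
      have hv : HasDerivWithinAt (fun s => u x₀ s + ε * s) (d + ε) (Icc (0:ℝ) T) t₀ :=
        hd.add hlin
      have hv' : HasDerivWithinAt (fun s => u x₀ s + ε * s) (d + ε) (Icc (0:ℝ) t₀) t₀ :=
        hv.mono (Icc_subset_Icc le_rfl ht₀.2)
      rw [hasDerivWithinAt_iff_tendsto_slope] at hv'
      haveI hne : (𝓝[Icc (0:ℝ) t₀ \ {t₀}] t₀).NeBot := by
        refine mem_closure_iff_nhdsWithin_neBot.mp ?_
        have hsub : Ico (0:ℝ) t₀ ⊆ Icc (0:ℝ) t₀ \ {t₀} := fun s hs =>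
          ⟨⟨hs.1, le_of_lt hs.2⟩, ne_of_lt hs.2⟩
        refine closure_mono hsub ?_
        rw [closure_Ico ht₀pos.ne]
        exact ⟨ht₀0, le_refl t₀⟩
      refine le_of_tendsto hv' ?_
      filter_upwards [self_mem_nhdsWithin] with s hs
      have hslt : s < t₀ := lt_of_le_of_ne hs.1.2 (by simpa using hs.2)
      have hsmem : ((x₀, s) : G × ℝ) ∈ S := ⟨hx₀, hs.1.1, le_trans hs.1.2 ht₀.2⟩
      have hge : u x₀ t₀ + ε * t₀ ≤ u x₀ s + ε * s := hp₀min hsmem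
      rw [slope_def_field]
      have hden : s - t₀ < 0 := by linarith
      rw [div_nonpos_iff]
      left
      constructor <;> linarith
    linarith
  -- conclude by letting ε → 0
  have hp : (x, t) ∈ closure Ω ×ˢ Icc (0:ℝ) T := ⟨hx, ht⟩
  have hten : Filter.Tendsto (fun ε : ℝ => u x t + ε * t) (𝓝[>] (0:ℝ)) (𝓝 (u x t)) := by
    have : Filter.Tendsto (fun ε : ℝ => u x t + ε * t) (𝓝 (0:ℝ)) (𝓝 (u x t + 0 * t)) := by
      exact Filter.Tendsto.add tendsto_const_nhds (tendsto_id.mul_const t)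
    simpa using this.mono_left nhdsWithin_le_nhds
  refine ge_of_tendsto hten ?_
  filter_upwards [self_mem_nhdsWithin] with ε hε
  exact key ε hε (x, t) hp
end

section
/- Let u₀, v₀ : Ω → ℝ be bounded with u₀ ≥ v₀ on Ω, and let g, h : (G ∖ Ω) × (0,T] → ℝ be bounded with g ≥ h. If u is a solution of the nonlocal Dirichlet problem with data (u₀, g) and v is a solution with data (v₀, h), then u(x,t) ≥ v(x,t) for all (x,t) ∈ cl(Ω) × [0,T]. -/
open MeasureTheory Set Topology Filter

/-- Comparison principle: solutions with ordered data are ordered. -/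
theorem stmt4 {G : Type*} [MetricSpace G] [MeasurableSpace G] [BorelSpace G]
    (μ : Measure G) (Ω : Set G) (hΩo : IsOpen Ω) (hΩne : Ω.Nonempty)
    (hΩc : IsCompact (closure Ω))
    (K : G → G → ℝ) (hK0 : ∀ x y, 0 ≤ K x y)
    (hKmeas : Measurable (fun p : G × G => K p.1 p.2))
    (hKint : ∀ x ∈ Ω, Integrable (fun y => K x y) μ)
    (T : ℝ) (hT : 0 < T)
    (u₀ v₀ : G → ℝ)
    (hu₀bdd : ∃ C, ∀ x ∈ Ω, |u₀ x| ≤ C) (hv₀bdd : ∃ C, ∀ x ∈ Ω, |v₀ x| ≤ C)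
    (hdata0 : ∀ x ∈ Ω, v₀ x ≤ u₀ x)
    (g h : G → ℝ → ℝ)
    (hgbdd : ∃ C, ∀ x ∉ Ω, ∀ t ∈ Ioc (0:ℝ) T, |g x t| ≤ C)
    (hhbdd : ∃ C, ∀ x ∉ Ω, ∀ t ∈ Ioc (0:ℝ) T, |h x t| ≤ C)
    (hdata : ∀ x ∉ Ω, ∀ t ∈ Ioc (0:ℝ) T, h x t ≤ g x t)
    (u v : G → ℝ → ℝ)
    (hu : IsSolutionNL μ Ω K T u₀ g u) (hv : IsSolutionNL μ Ω K T v₀ h v) :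
    ∀ x ∈ closure Ω, ∀ t ∈ Icc (0:ℝ) T, v x t ≤ u x t := by
  obtain ⟨hu_sup, -⟩ := hu
  obtain ⟨-, hv_sub⟩ := hv
  obtain ⟨⟨Cu, hCu⟩, humeas, hucont, huPDE, hug, hu0⟩ := hu_sup
  obtain ⟨⟨Cv, hCv⟩, hvmeas, hvcont, hvPDE, hvh, hv0⟩ := hv_sub
  set S : Set (G × ℝ) := closure Ω ×ˢ Icc (0:ℝ) T with hS
  have hScomp : IsCompact S := hΩc.prod isCompact_Icc
  obtain ⟨z, hz⟩ := hΩne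
  have hSne : S.Nonempty := ⟨(z, 0), subset_closure hz, le_refl 0, hT.le⟩
  -- nonnegativity of u - v at time 0 on the closure
  have hw0 : ∀ x ∈ closure Ω, 0 ≤ u x 0 - v x 0 := by
    intro x hx
    by_cases hxΩ : x ∈ Ω
    · have h1 := hdata0 x hxΩ
      have h2 := hu0 x hxΩ
      have h3 := hv0 x hxΩ
      linarith
    · -- boundary point: use continuity from positive times
      have hcw : ContinuousWithinAt (fun p : G × ℝ => u p.1 p.2 - v p.1 p.2) S (x, 0) :=
        (hucont.sub hvcont) (x, 0) ⟨hx, le_refl 0, hT.le⟩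
      have hmap : MapsTo (fun t : ℝ => (x, t)) (Icc (0:ℝ) T) S := fun t ht => ⟨hx, ht⟩
      have hcw2 : ContinuousWithinAt (fun t : ℝ => u x t - v x t) (Icc (0:ℝ) T) 0 :=
        hcw.comp ((continuous_const.prodMk continuous_id).continuousWithinAt) hmap
      haveI hne : (𝓝[Ioc (0:ℝ) T] (0:ℝ)).NeBot := by
        refine mem_closure_iff_nhdsWithin_neBot.mp ?_
        rw [closure_Ioc hT.ne]
        exact ⟨le_refl 0, hT.le⟩
      have htend : Filter.Tendsto (fun t : ℝ => u x t - v x t) (𝓝[Ioc (0:ℝ) T] 0)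
          (𝓝 (u x 0 - v x 0)) :=
        hcw2.tendsto.mono_left (nhdsWithin_mono _ Ioc_subset_Icc_self)
      refine ge_of_tendsto htend ?_
      filter_upwards [self_mem_nhdsWithin] with t ht
      have h1 := hug x hxΩ t ht
      have h2 := hvh x hxΩ t ht
      have h3 := hdata x hxΩ t ht
      linarith
  -- main claim with penalization
  have key : ∀ ε : ℝ, 0 < ε → ∀ x ∈ closure Ω, ∀ t ∈ Icc (0:ℝ) T,
      0 ≤ u x t - v x t + ε * t := by
    intro ε hε x hx t ht
    set W : G × ℝ → ℝ := fun p => u p.1 p.2 - v p.1 p.2 + ε * p.2 with hW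
    have hcont : ContinuousOn W S :=
      (hucont.sub hvcont).add ((continuous_const.mul continuous_snd).continuousOn)
    obtain ⟨p₀, hp₀S, hp₀min⟩ := hScomp.exists_isMinOn hSne hcont
    have hmin : ∀ q ∈ S, W p₀ ≤ W q := fun q hq => hp₀min hq
    have h0 : 0 ≤ W p₀ := by
      by_contra hneg
      push_neg at hneg
      obtain ⟨x₀, t₀⟩ := p₀
      have hx₀ : x₀ ∈ closure Ω := hp₀S.1
      have ht₀ : t₀ ∈ Icc (0:ℝ) T := hp₀S.2
      have ht₀pos : 0 < t₀ := by
        rcases eq_or_lt_of_le ht₀.1 with heq | hlt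
        · exfalso
          have := hw0 x₀ hx₀
          simp only [hW, W, ← heq] at hneg
          simp only [mul_zero] at hneg
          linarith
        · exact hlt
      have hx₀Ω : x₀ ∈ Ω := by
        by_contra hx₀n
        have h1 := hug x₀ hx₀n t₀ ⟨ht₀pos, ht₀.2⟩
        have h2 := hvh x₀ hx₀n t₀ ⟨ht₀pos, ht₀.2⟩
        have h3 := hdata x₀ hx₀n t₀ ⟨ht₀pos, ht₀.2⟩
        have : 0 < ε * t₀ := mul_pos hε ht₀pos
        simp only [hW, W] at hneg
        linarith
      obtain ⟨du, hdu, hduge⟩ := huPDE x₀ hx₀Ω t₀ ⟨ht₀pos, ht₀.2⟩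
      obtain ⟨dv, hdv, hdvle⟩ := hvPDE x₀ hx₀Ω t₀ ⟨ht₀pos, ht₀.2⟩
      -- pointwise comparison at time t₀
      have hmono_pt : ∀ y, u x₀ t₀ - v x₀ t₀ ≤ u y t₀ - v y t₀ := by
        intro y
        by_cases hy : y ∈ Ω
        · have := hmin (y, t₀) ⟨subset_closure hy, ht₀⟩
          simp only [hW, W] at this
          linarith
        · have h1 := hug y hy t₀ ⟨ht₀pos, ht₀.2⟩
          have h2 := hvh y hy t₀ ⟨ht₀pos, ht₀.2⟩
          have h3 := hdata y hy t₀ ⟨ht₀pos, ht₀.2⟩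
          have : 0 < ε * t₀ := mul_pos hε ht₀pos
          simp only [hW, W] at hneg
          linarith
      -- integrability
      have hKm : Measurable fun y => K x₀ y :=
        hKmeas.comp (measurable_const.prodMk measurable_id)
      have hum : Measurable fun y => u y t₀ :=
        humeas.comp (measurable_id.prodMk measurable_const)
      have hvm : Measurable fun y => v y t₀ :=
        hvmeas.comp (measurable_id.prodMk measurable_const)
      have Iu : Integrable (fun y => K x₀ y * (u y t₀ - u x₀ t₀)) μ := by
        refine Integrable.mono' (((hKint x₀ hx₀Ω).const_mul (2 * Cu)))
          ((hKm.mul ((hum.sub measurable_const))).aestronglyMeasurable) ?_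
        filter_upwards with y
        have hK := hK0 x₀ y
        have h1 := hCu y t₀
        have h2 := hCu x₀ t₀
        rw [Real.norm_eq_abs, abs_mul, abs_of_nonneg hK]
        have : |u y t₀ - u x₀ t₀| ≤ 2 * Cu := by
          calc |u y t₀ - u x₀ t₀| ≤ |u y t₀| + |u x₀ t₀| := abs_sub _ _
          _ ≤ 2 * Cu := by linarith
        calc K x₀ y * |u y t₀ - u x₀ t₀| ≤ K x₀ y * (2 * Cu) :=
              mul_le_mul_of_nonneg_left this hK
        _ = 2 * Cu * K x₀ y := by ring
      have Iv : Integrable (fun y => K x₀ y * (v y t₀ - v x₀ t₀)) μ := by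
        refine Integrable.mono' (((hKint x₀ hx₀Ω).const_mul (2 * Cv)))
          ((hKm.mul ((hvm.sub measurable_const))).aestronglyMeasurable) ?_
        filter_upwards with y
        have hK := hK0 x₀ y
        have h1 := hCv y t₀
        have h2 := hCv x₀ t₀
        rw [Real.norm_eq_abs, abs_mul, abs_of_nonneg hK]
        have : |v y t₀ - v x₀ t₀| ≤ 2 * Cv := by
          calc |v y t₀ - v x₀ t₀| ≤ |v y t₀| + |v x₀ t₀| := abs_sub _ _
          _ ≤ 2 * Cv := by linarith
        calc K x₀ y * |v y t₀ - v x₀ t₀| ≤ K x₀ y * (2 * Cv) :=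
              mul_le_mul_of_nonneg_left this hK
        _ = 2 * Cv * K x₀ y := by ring
      have hint : (∫ y, K x₀ y * (v y t₀ - v x₀ t₀) ∂μ)
          ≤ ∫ y, K x₀ y * (u y t₀ - u x₀ t₀) ∂μ := by
        refine integral_mono Iv Iu fun y => ?_
        refine mul_le_mul_of_nonneg_left ?_ (hK0 x₀ y)
        have := hmono_pt y
        linarith
      have hdvu : dv ≤ du := le_trans hdvle (le_trans hint hduge)
      -- derivative of the penalized function
      have hlin : HasDerivWithinAt (fun s : ℝ => ε * s) ε (Icc (0:ℝ) T) t₀ := by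
        simpa using ((hasDerivWithinAt_id t₀ (Icc (0:ℝ) T)).const_mul ε)
      have hderiv : HasDerivWithinAt (fun s => u x₀ s - v x₀ s + ε * s)
          (du - dv + ε) (Icc (0:ℝ) T) t₀ := (hdu.sub hdv).add hlin
      have hsub : Icc (0:ℝ) t₀ ⊆ Icc (0:ℝ) T := Icc_subset_Icc_right ht₀.2
      have hd' := (hderiv.mono hsub)
      rw [hasDerivWithinAt_iff_tendsto_slope] at hd'
      haveI hne2 : (𝓝[Icc (0:ℝ) t₀ \ {t₀}] t₀).NeBot := by
        apply mem_closure_iff_nhdsWithin_neBot.mp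
        have hsub2 : Ico (0:ℝ) t₀ ⊆ Icc (0:ℝ) t₀ \ {t₀} := fun s hs =>
          ⟨⟨hs.1, hs.2.le⟩, by simp [ne_of_lt hs.2]⟩
        apply closure_mono hsub2
        rw [closure_Ico ht₀pos.ne]
        exact ⟨ht₀pos.le, le_refl _⟩
      have hle : du - dv + ε ≤ 0 := by
        refine le_of_tendsto hd' ?_
        filter_upwards [self_mem_nhdsWithin] with s hs
        have hs1 : s ∈ Icc (0:ℝ) t₀ := hs.1
        have hslt : s < t₀ := lt_of_le_of_ne hs1.2 (by simpa using hs.2)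
        have hfs : W (x₀, t₀) ≤ W (x₀, s) :=
          hmin (x₀, s) ⟨hx₀, hs1.1, le_trans hs1.2 ht₀.2⟩
        simp only [hW, W] at hfs
        rw [slope_def_field]
        apply div_nonpos_of_nonneg_of_nonpos
        · linarith
        · linarith
      linarith
    have hfin : 0 ≤ W (x, t) := le_trans h0 (hmin (x, t) ⟨hx, ht⟩)
    simpa only [hW, W] using hfin
  intro x hx t ht
  refine le_of_forall_pos_le_add fun ε hε => ?_
  have hδ : 0 < ε / T := div_pos hε hT
  have h1 := key (ε / T) hδ x hx t ht
  have h2 : (ε / T) * t ≤ (ε / T) * T := mul_le_mul_of_nonneg_left ht.2 hδ.le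
  rw [div_mul_cancel₀ _ hT.ne'] at h2
  linarith
end

section
/- Let u₀ : Ω → ℝ and g : (G ∖ Ω) × (0,T] → ℝ be bounded. If u is a supersolution and v is a subsolution of the nonlocal Dirichlet problem with the same data (u₀, g), then u(x,t) ≥ v(x,t) for all (x,t) ∈ cl(Ω) × [0,T]. -/
open MeasureTheory Set

/-- Comparison of super- and subsolutions with the same data. -/
theorem stmt5 {G : Type*} [MetricSpace G] [MeasurableSpace G] [BorelSpace G]
    (μ : Measure G) (Ω : Set G) (hΩo : IsOpen Ω) (hΩne : Ω.Nonempty)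
    (hΩc : IsCompact (closure Ω))
    (K : G → G → ℝ) (hK0 : ∀ x y, 0 ≤ K x y)
    (hKmeas : Measurable (fun p : G × G => K p.1 p.2))
    (hKint : ∀ x ∈ Ω, Integrable (fun y => K x y) μ)
    (T : ℝ) (hT : 0 < T)
    (u₀ : G → ℝ) (hu₀bdd : ∃ C, ∀ x ∈ Ω, |u₀ x| ≤ C)
    (g : G → ℝ → ℝ) (hgbdd : ∃ C, ∀ x ∉ Ω, ∀ t ∈ Ioc (0:ℝ) T, |g x t| ≤ C)
    (u v : G → ℝ → ℝ)
    (hu : IsSupersolutionNL μ Ω K T u₀ g u) (hv : IsSubsolutionNL μ Ω K T u₀ g v) :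
    ∀ x ∈ closure Ω, ∀ t ∈ Icc (0:ℝ) T, v x t ≤ u x t := by
  obtain ⟨⟨Cu, hCu⟩, humeas, hucont, huderiv, hug, hu0⟩ := hu
  obtain ⟨⟨Cv, hCv⟩, hvmeas, hvcont, hvderiv, hvg, hv0⟩ := hv
  by_contra hcon
  push_neg at hcon
  obtain ⟨x₁, hx₁, t₁, ht₁, hwpos⟩ := hcon
  set ε : ℝ := (v x₁ t₁ - u x₁ t₁) / (2 * T) with hε
  have hεpos : 0 < ε := div_pos (by linarith) (by linarith)
  -- the perturbed function φ
  set φ : G × ℝ → ℝ := fun p => v p.1 p.2 - u p.1 p.2 - ε * p.2 with hφ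
  set S : Set (G × ℝ) := closure Ω ×ˢ Icc 0 T with hS
  have hScomp : IsCompact S := hΩc.prod isCompact_Icc
  have hSne : S.Nonempty := ⟨(x₁, t₁), ⟨hx₁, ht₁⟩⟩
  have hφcont : ContinuousOn φ S := by
    apply ContinuousOn.sub (hvcont.sub hucont)
    exact Continuous.continuousOn (by fun_prop)
  obtain ⟨p₀, hp₀S, hp₀max⟩ := hScomp.exists_isMaxOn hSne hφcont
  obtain ⟨x₀, t₀⟩ := p₀
  obtain ⟨hx₀cl, ht₀⟩ := hp₀S
  simp only at hx₀cl ht₀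
  have hmax' : ∀ p ∈ S, φ p ≤ φ (x₀, t₀) := fun p hp => hp₀max hp
  have hφ₀pos : 0 < φ (x₀, t₀) := by
    have h1 := hmax' (x₁, t₁) ⟨hx₁, ht₁⟩
    have h2 : ε * t₁ ≤ ε * T := mul_le_mul_of_nonneg_left ht₁.2 hεpos.le
    have hεT : ε * T = (v x₁ t₁ - u x₁ t₁) / 2 := by
      rw [hε]; field_simp
    simp only [hφ] at h1 ⊢
    nlinarith
  -- at time 0, v - u ≤ 0 on the closure of Ω
  have hzero : ∀ x ∈ closure Ω, v x 0 - u x 0 ≤ 0 := by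
    intro x hx
    have hcont : ContinuousWithinAt (fun y => v y 0 - u y 0) Ω x := by
      have h1 : ContinuousWithinAt (fun p : G × ℝ => v p.1 p.2 - u p.1 p.2) S (x, 0) :=
        (hvcont.sub hucont) (x, 0) ⟨hx, le_refl 0, hT.le⟩
      have h2 : ContinuousWithinAt (fun y : G => ((y, (0:ℝ)) : G × ℝ)) Ω x :=
        (continuous_id.prodMk continuous_const).continuousWithinAt
      exact ContinuousWithinAt.comp (g := fun p : G × ℝ => v p.1 p.2 - u p.1 p.2)
        (f := fun y : G => ((y, (0:ℝ)) : G × ℝ)) h1 h2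
        (fun y hy => ⟨subset_closure hy, le_refl 0, hT.le⟩)
    haveI hne : (nhdsWithin x Ω).NeBot := mem_closure_iff_nhdsWithin_neBot.mp hx
    refine le_of_tendsto hcont ?_
    filter_upwards [self_mem_nhdsWithin] with y hy
    have := hv0 y hy
    have := hu0 y hy
    linarith
  -- t₀ > 0
  have ht₀pos : 0 < t₀ := by
    rcases lt_or_eq_of_le ht₀.1 with h | h
    · exact h
    · exfalso
      have h0 := hzero x₀ hx₀cl
      rw [show ((x₀, t₀) : G × ℝ) = (x₀, 0) by rw [← h]] at hφ₀pos
      simp only [hφ] at hφ₀pos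
      linarith
  -- x₀ ∈ Ω
  have hx₀Ω : x₀ ∈ Ω := by
    by_contra hx₀
    have h1 := hvg x₀ hx₀ t₀ ⟨ht₀pos, ht₀.2⟩
    have h2 := hug x₀ hx₀ t₀ ⟨ht₀pos, ht₀.2⟩
    have h3 : v x₀ t₀ - u x₀ t₀ ≤ 0 := by linarith
    simp only [hφ] at hφ₀pos
    nlinarith [mul_pos hεpos ht₀pos]
  -- v - u attains its max over all of G (at time t₀) at x₀
  have hglobalmax : ∀ y, v y t₀ - v x₀ t₀ - (u y t₀ - u x₀ t₀) ≤ 0 := by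
    intro y
    by_cases hy : y ∈ closure Ω
    · have h1 := hmax' (y, t₀) ⟨hy, ht₀⟩
      simp only [hφ] at h1
      linarith
    · have hyΩ : y ∉ Ω := fun h => hy (subset_closure h)
      have h1 := hvg y hyΩ t₀ ⟨ht₀pos, ht₀.2⟩
      have h2 := hug y hyΩ t₀ ⟨ht₀pos, ht₀.2⟩
      simp only [hφ] at hφ₀pos
      nlinarith [mul_pos hεpos ht₀pos]
  -- derivatives
  obtain ⟨du, hdu, hdu_ge⟩ := huderiv x₀ hx₀Ω t₀ ⟨ht₀pos, ht₀.2⟩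
  obtain ⟨dv, hdv, hdv_le⟩ := hvderiv x₀ hx₀Ω t₀ ⟨ht₀pos, ht₀.2⟩
  -- the function s ↦ φ(x₀, s) has a max on Icc 0 T at t₀
  have hmaxt : IsMaxOn (fun s => v x₀ s - u x₀ s - ε * s) (Icc 0 T) t₀ := by
    intro s hs
    have h1 := hmax' (x₀, s) ⟨hx₀cl, hs⟩
    simpa [hφ] using h1
  have hderφ : HasDerivWithinAt (fun s => v x₀ s - u x₀ s - ε * s) (dv - du - ε)
      (Icc 0 T) t₀ := by
    have := (hdv.sub hdu).sub ((hasDerivWithinAt_id t₀ (Icc 0 T)).const_mul ε)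
    rw [mul_one] at this; exact this
  -- the left-derivative at a max over [0,T] at t₀ > 0 is nonneg
  have hd_nonneg : 0 ≤ dv - du - ε := by
    have hmem : -t₀ ∈ posTangentConeAt (Icc 0 T) t₀ := by
      apply mem_posTangentConeAt_of_segment_subset
      have : segment ℝ t₀ (t₀ + -t₀) = Icc 0 t₀ := by
        rw [add_neg_cancel, segment_symm, segment_eq_Icc ht₀pos.le]
      rw [this]
      exact Icc_subset_Icc le_rfl ht₀.2
    have := hmaxt.localize.hasFDerivWithinAt_nonpos hderφ.hasFDerivWithinAt hmem
    simp only [ContinuousLinearMap.toSpanSingleton_apply,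
      smul_eq_mul] at this
    nlinarith [this, ht₀pos]
  -- integrability
  have hKi := hKint x₀ hx₀Ω
  have hmeas_v : Measurable (fun y => v y t₀) :=
    hvmeas.comp (measurable_id.prodMk measurable_const)
  have hmeas_u : Measurable (fun y => u y t₀) :=
    humeas.comp (measurable_id.prodMk measurable_const)
  have hint_v : Integrable (fun y => K x₀ y * (v y t₀ - v x₀ t₀)) μ := by
    have := hKi.bdd_mul ((hmeas_v.sub measurable_const).aestronglyMeasurable)
      (c := Cv + Cv) (ae_of_all _ fun y => by
        have h1 := hCv y t₀; have h2 := hCv x₀ t₀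
        simp only [Real.norm_eq_abs]
        calc |v y t₀ - v x₀ t₀| ≤ |v y t₀| + |v x₀ t₀| := abs_sub _ _
        _ ≤ Cv + Cv := by linarith)
    simpa [mul_comm] using this
  have hint_u : Integrable (fun y => K x₀ y * (u y t₀ - u x₀ t₀)) μ := by
    have := hKi.bdd_mul ((hmeas_u.sub measurable_const).aestronglyMeasurable)
      (c := Cu + Cu) (ae_of_all _ fun y => by
        have h1 := hCu y t₀; have h2 := hCu x₀ t₀
        simp only [Real.norm_eq_abs]
        calc |u y t₀ - u x₀ t₀| ≤ |u y t₀| + |u x₀ t₀| := abs_sub _ _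
        _ ≤ Cu + Cu := by linarith)
    simpa [mul_comm] using this
  -- the integral comparison
  have hint_le : (∫ y, K x₀ y * (v y t₀ - v x₀ t₀) ∂μ)
      - (∫ y, K x₀ y * (u y t₀ - u x₀ t₀) ∂μ) ≤ 0 := by
    rw [← integral_sub hint_v hint_u]
    apply integral_nonpos
    intro y
    have h1 := hglobalmax y
    have h2 := hK0 x₀ y
    simp only [Pi.zero_apply]
    nlinarith
  linarith
end

section
/- Let a, u : ℝⁿ → ℝ be bounded functions such that the product f = a·u belongs to C²(ℝⁿ) and has α-Hölder second derivatives with constant H. For ε > 0 define ℒ_ε u(x) = (2 / (C(J) ε^{n+2})) ∫_{ℝⁿ} J((x − y)/ε) (a(y)u(y) − a(x)u(x)) dy. Then there exists a constant C, depending only on n, α, H and on ∫_{ℝⁿ} J(y)|y|^{2+α} dy, such that sup_{x ∈ ℝⁿ} |ℒ_ε u(x) − Δ(a u)(x)| ≤ C ε^α for every ε > 0. (This is the abelian instance of the paper's Lemma concerning the Fokker–Planck operator ℒ(v) = Σᵢ Xᵢ Xᵢ (a v), which in ℝⁿ is Δ(a v).) -/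
open MeasureTheory Matrix Set

/-- First partial derivative `∂ᵢ f (x)`. -/
noncomputable def pd1 {n : ℕ} (f : EuclideanSpace ℝ (Fin n) → ℝ)
    (x : EuclideanSpace ℝ (Fin n)) (i : Fin n) : ℝ :=
  fderiv ℝ f x (EuclideanSpace.single i 1)

/-- Second partial derivative `∂ᵢ∂ⱼ f (x)`. -/
noncomputable def pd2 {n : ℕ} (f : EuclideanSpace ℝ (Fin n) → ℝ)
    (x : EuclideanSpace ℝ (Fin n)) (i j : Fin n) : ℝ :=
  fderiv ℝ (fderiv ℝ f) x (EuclideanSpace.single i 1) (EuclideanSpace.single j 1)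

/-- The Laplacian `Δf(x) = ∑ᵢ ∂ᵢ∂ᵢ f(x)`. -/
noncomputable def lap {n : ℕ} (f : EuclideanSpace ℝ (Fin n) → ℝ)
    (x : EuclideanSpace ℝ (Fin n)) : ℝ :=
  ∑ i, pd2 f x i i


variable {n : ℕ}

lemma coord_abs_le_norm (v : EuclideanSpace ℝ (Fin n)) (i : Fin n) : |v i| ≤ ‖v‖ := by
  have h : (inner ℝ (EuclideanSpace.single i (1 : ℝ)) v : ℝ) = v i := by
    rw [EuclideanSpace.inner_single_left]; simp
  calc |v i| = |(inner ℝ (EuclideanSpace.single i (1 : ℝ)) v : ℝ)| := by rw [h]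
    _ ≤ ‖EuclideanSpace.single i (1 : ℝ)‖ * ‖v‖ := abs_real_inner_le_norm _ _
    _ = ‖v‖ := by rw [EuclideanSpace.norm_single]; simp

lemma euclid_sum_single (v : EuclideanSpace ℝ (Fin n)) :
    v = ∑ i, v i • EuclideanSpace.single i (1 : ℝ) := by
  have h := (EuclideanSpace.basisFun (Fin n) ℝ).sum_repr v
  simp only [EuclideanSpace.basisFun_repr, EuclideanSpace.basisFun_apply] at h
  exact h.symm

lemma clm_apply_eq (L : EuclideanSpace ℝ (Fin n) →L[ℝ] ℝ) (w : EuclideanSpace ℝ (Fin n)) :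
    L w = ∑ j, w j * L (EuclideanSpace.single j 1) := by
  conv_lhs => rw [euclid_sum_single w]
  rw [map_sum]
  refine Finset.sum_congr rfl fun j _ => ?_
  rw [_root_.map_smul, smul_eq_mul]

lemma bilin_apply_eq (B : EuclideanSpace ℝ (Fin n) →L[ℝ] EuclideanSpace ℝ (Fin n) →L[ℝ] ℝ)
    (v w : EuclideanSpace ℝ (Fin n)) :
    B v w = ∑ i, ∑ j, (v i * w j) *
      B (EuclideanSpace.single i 1) (EuclideanSpace.single j 1) := by
  rw [clm_apply_eq (B v) w, Finset.sum_comm]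
  refine Finset.sum_congr rfl fun i _ => ?_
  have : B v (EuclideanSpace.single i 1) = (B.flip (EuclideanSpace.single i 1)) v := rfl
  rw [this, clm_apply_eq (B.flip (EuclideanSpace.single i 1)) v]
  rw [Finset.mul_sum]
  refine Finset.sum_congr rfl fun j _ => ?_
  have : B.flip (EuclideanSpace.single i 1) (EuclideanSpace.single j 1)
      = B (EuclideanSpace.single j 1) (EuclideanSpace.single i 1) := rfl
  rw [this]; ring

lemma bilin_opNorm_le (B : EuclideanSpace ℝ (Fin n) →L[ℝ] EuclideanSpace ℝ (Fin n) →L[ℝ] ℝ) :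
    ‖B‖ ≤ ∑ i, ∑ j, |B (EuclideanSpace.single i 1) (EuclideanSpace.single j 1)| := by
  refine ContinuousLinearMap.opNorm_le_bound _ (by positivity) fun v => ?_
  refine ContinuousLinearMap.opNorm_le_bound _ (by positivity) fun w => ?_
  rw [Real.norm_eq_abs, bilin_apply_eq]
  calc |∑ i, ∑ j, (v i * w j) * B (EuclideanSpace.single i 1) (EuclideanSpace.single j 1)|
      ≤ ∑ i, ∑ j, |(v i * w j) * B (EuclideanSpace.single i 1) (EuclideanSpace.single j 1)| := by
        refine (Finset.abs_sum_le_sum_abs _ _).trans (Finset.sum_le_sum fun i _ => ?_)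
        exact Finset.abs_sum_le_sum_abs _ _
    _ ≤ ∑ i, ∑ j, |B (EuclideanSpace.single i 1) (EuclideanSpace.single j 1)| * (‖v‖ * ‖w‖) := by
        refine Finset.sum_le_sum fun i _ => Finset.sum_le_sum fun j _ => ?_
        rw [abs_mul, abs_mul]
        have h1 : |v i| * |w j| ≤ ‖v‖ * ‖w‖ :=
          mul_le_mul (coord_abs_le_norm v i) (coord_abs_le_norm w j) (abs_nonneg _) (norm_nonneg _)
        calc |v i| * |w j| * |B (EuclideanSpace.single i 1) (EuclideanSpace.single j 1)|
            ≤ ‖v‖ * ‖w‖ * |B (EuclideanSpace.single i 1) (EuclideanSpace.single j 1)| :=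
              mul_le_mul_of_nonneg_right h1 (abs_nonneg _)
          _ = |B (EuclideanSpace.single i 1) (EuclideanSpace.single j 1)| * (‖v‖ * ‖w‖) := by ring
    _ = (∑ i, ∑ j, |B (EuclideanSpace.single i 1) (EuclideanSpace.single j 1)|) * ‖v‖ * ‖w‖ := by
        rw [Finset.sum_mul, Finset.sum_mul]
        refine Finset.sum_congr rfl fun i _ => ?_
        rw [Finset.sum_mul, Finset.sum_mul]
        refine Finset.sum_congr rfl fun j _ => ?_
        ring
lemma taylor_bound {α : ℝ} (hα0 : 0 < α) (hα1 : α ≤ 1) {K : ℝ} (hK : 0 ≤ K)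
    {f : EuclideanSpace ℝ (Fin n) → ℝ} (hf : ContDiff ℝ 2 f)
    (hHol : ∀ p q : EuclideanSpace ℝ (Fin n),
      ‖fderiv ℝ (fderiv ℝ f) p - fderiv ℝ (fderiv ℝ f) q‖ ≤ K * ‖p - q‖ ^ α)
    (x h : EuclideanSpace ℝ (Fin n)) :
    |f (x + h) - f x - fderiv ℝ f x h -
        (1 / 2 : ℝ) * fderiv ℝ (fderiv ℝ f) x h h| ≤ K * ‖h‖ ^ ((2 : ℝ) + α) := by
  set F' : EuclideanSpace ℝ (Fin n) → (EuclideanSpace ℝ (Fin n) →L[ℝ] ℝ) := fderiv ℝ f with hF'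
  set F'' : EuclideanSpace ℝ (Fin n) → (EuclideanSpace ℝ (Fin n) →L[ℝ] (EuclideanSpace ℝ (Fin n) →L[ℝ] ℝ)) := fderiv ℝ F' with hF''
  have hd1 : Differentiable ℝ f := hf.differentiable (by norm_num)
  have hd2 : Differentiable ℝ F' := (hf.fderiv_right (m := 1) (by norm_num)).differentiable
    (by norm_num)
  have hsymm : ∀ p : EuclideanSpace ℝ (Fin n), ∀ v w, F'' p v w = F'' p w v := fun p =>
    second_derivative_symmetric (fun y => (hd1 y).hasFDerivAt) (hd2 p).hasFDerivAt
  set φ : EuclideanSpace ℝ (Fin n) → (EuclideanSpace ℝ (Fin n) →L[ℝ] ℝ) := fun k => F' (x + k) - F' x - F'' x k with hφ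
  have hA : ∀ k : EuclideanSpace ℝ (Fin n), HasFDerivAt (fun k : EuclideanSpace ℝ (Fin n) => F' (x + k)) (F'' (x + k)) k := by
    intro k
    have := ((hd2 (x + k)).hasFDerivAt).comp k ((hasFDerivAt_id k).const_add x)
    simpa [Function.comp_def] using this
  have hφ' : ∀ k : EuclideanSpace ℝ (Fin n), HasFDerivAt φ (F'' (x + k) - F'' x) k := by
    intro k
    exact (((hA k).sub_const (F' x)).sub (F'' x).hasFDerivAt)
  set s : Set (EuclideanSpace ℝ (Fin n)) := Metric.closedBall (0 : EuclideanSpace ℝ (Fin n)) ‖h‖ with hs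
  have h0s : (0 : EuclideanSpace ℝ (Fin n)) ∈ s := by simp [hs]
  have hhs : h ∈ s := by simp [hs]
  have hφbound : ∀ k ∈ s, ‖φ k‖ ≤ (K * ‖h‖ ^ α) * ‖k‖ := by
    intro k hk
    have hder : ∀ p ∈ s, HasFDerivWithinAt φ (F'' (x + p) - F'' x) s p :=
      fun p _ => (hφ' p).hasFDerivWithinAt
    have hbd : ∀ p ∈ s, ‖F'' (x + p) - F'' x‖ ≤ K * ‖h‖ ^ α := by
      intro p hp
      have := hHol (x + p) x
      rw [add_sub_cancel_left] at this
      refine this.trans ?_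
      have hp' : ‖p‖ ≤ ‖h‖ := by simpa [hs] using hp
      exact mul_le_mul_of_nonneg_left
        (Real.rpow_le_rpow (norm_nonneg _) hp' hα0.le) hK
    have := (convex_closedBall (0 : EuclideanSpace ℝ (Fin n)) ‖h‖).norm_image_sub_le_of_norm_hasFDerivWithin_le
      hder hbd h0s hk
    have hφ0 : φ 0 = 0 := by simp [hφ]
    rw [hφ0, sub_zero, sub_zero] at this
    exact this
  set g : EuclideanSpace ℝ (Fin n) → ℝ := fun k => f (x + k) - f x - F' x k - (1 / 2 : ℝ) * F'' x k k with hg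
  have hg' : ∀ k : EuclideanSpace ℝ (Fin n), HasFDerivAt g (φ k) k := by
    intro k
    have hB : IsBoundedBilinearMap ℝ (fun p : EuclideanSpace ℝ (Fin n) × EuclideanSpace ℝ (Fin n) => F'' x p.1 p.2) :=
      (F'' x).isBoundedBilinearMap
    have hdiag : HasFDerivAt (fun k : EuclideanSpace ℝ (Fin n) => (k, k))
        ((ContinuousLinearMap.id ℝ (EuclideanSpace ℝ (Fin n))).prod
          (ContinuousLinearMap.id ℝ (EuclideanSpace ℝ (Fin n)))) k :=
      (hasFDerivAt_id k).prodMk (hasFDerivAt_id k)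
    have hq0 := HasFDerivAt.comp (f := fun k : EuclideanSpace ℝ (Fin n) => (k, k)) k (hB.hasFDerivAt (k, k)) hdiag
    have hq : HasFDerivAt (fun k : EuclideanSpace ℝ (Fin n) => F'' x k k)
        ((hB.deriv (k, k)).comp ((ContinuousLinearMap.id ℝ (EuclideanSpace ℝ (Fin n))).prod
          (ContinuousLinearMap.id ℝ (EuclideanSpace ℝ (Fin n))))) k := hq0
    have h1 : HasFDerivAt (fun k : EuclideanSpace ℝ (Fin n) => f (x + k)) (F' (x + k)) k := by
      have := ((hd1 (x + k)).hasFDerivAt).comp k ((hasFDerivAt_id k).const_add x)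
      simpa [Function.comp_def] using this
    have h4 := (((h1.sub_const (f x)).sub (F' x).hasFDerivAt).sub (hq.const_mul (1 / 2 : ℝ)))
    refine h4.congr_fderiv ?_
    ext w
    have hder : hB.deriv (k, k) (w, w) = F'' x k w + F'' x w k := hB.deriv_apply (k, k) (w, w)
    simp only [hφ, ContinuousLinearMap.sub_apply, ContinuousLinearMap.smul_apply,
      ContinuousLinearMap.coe_comp', Function.comp_apply, ContinuousLinearMap.prod_apply,
      ContinuousLinearMap.coe_id', id_eq]
    rw [hder, hsymm x w k]
    simp [smul_eq_mul]
    ring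
  have hgbound : ∀ k ∈ s, ‖φ k‖ ≤ K * ‖h‖ ^ α * ‖h‖ := by
    intro k hk
    refine (hφbound k hk).trans ?_
    have hk' : ‖k‖ ≤ ‖h‖ := by simpa [hs] using hk
    exact mul_le_mul_of_nonneg_left hk' (by positivity)
  have hMVT := (convex_closedBall (0 : EuclideanSpace ℝ (Fin n)) ‖h‖).norm_image_sub_le_of_norm_hasFDerivWithin_le
    (fun p _ => (hg' p).hasFDerivWithinAt) hgbound h0s hhs
  have hg0 : g 0 = 0 := by simp [hg]
  rw [hg0, sub_zero, sub_zero] at hMVT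
  have hgh : g h = f (x + h) - f x - fderiv ℝ f x h -
      (1 / 2 : ℝ) * fderiv ℝ (fderiv ℝ f) x h h := rfl
  rw [← hgh, ← Real.norm_eq_abs]
  refine hMVT.trans ?_
  rcases eq_or_lt_of_le (norm_nonneg h) with h0 | h0
  · rw [← h0, Real.zero_rpow (by positivity : (2 : ℝ) + α ≠ 0), mul_zero]
    rw [← h0] at hMVT
    simpa using hMVT
  · rw [Real.rpow_add h0, Real.rpow_two]
    ring_nf
    exact le_refl _
lemma integrable_J_mul {J : EuclideanSpace ℝ (Fin n) → ℝ} (hJint : Integrable J)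
    (hJcs : HasCompactSupport J) {g : EuclideanSpace ℝ (Fin n) → ℝ} (hg : Continuous g) :
    Integrable fun z => J z * g z := by
  obtain ⟨M, hM⟩ := hJcs.exists_bound_of_continuousOn hg.continuousOn
  refine ((hJint.abs.const_mul (max M 0)).mono'
    (hJint.aestronglyMeasurable.mul hg.aestronglyMeasurable)
    (Filter.Eventually.of_forall fun z => ?_))
  by_cases hz : z ∈ tsupport J
  · rw [Real.norm_eq_abs, abs_mul, mul_comm]
    exact mul_le_mul_of_nonneg_right ((hM z hz).trans (le_max_left _ _)) (abs_nonneg _)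
  · rw [image_eq_zero_of_notMem_tsupport hz]
    simp only [zero_mul, norm_zero]
    positivity

lemma moment_odd {J : EuclideanSpace ℝ (Fin n) → ℝ} (hJeven : ∀ x, J (-x) = J x) (i : Fin n) :
    (∫ z : EuclideanSpace ℝ (Fin n), J z * z i) = 0 := by
  have h := integral_neg_eq_self (fun z : EuclideanSpace ℝ (Fin n) => J z * z i) volume
  have h2 : (∫ z : EuclideanSpace ℝ (Fin n), J (-z) * (-z) i)
      = ∫ z : EuclideanSpace ℝ (Fin n), -(J z * z i) := by
    congr 1
    funext z
    rw [hJeven]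
    have : (-z) i = -(z i) := rfl
    rw [this]
    ring
  rw [h2, integral_neg] at h
  linarith
/-- The rescaled non-local Fokker–Planck operator `ℒ_ε` approximates `Δ(a·u)` at rate `ε^α`. -/
theorem stmt7 (n : ℕ) (hn : 1 ≤ n)
    (J : EuclideanSpace ℝ (Fin n) → ℝ) (hJint : Integrable J)
    (hJcs : HasCompactSupport J) (hJ0 : ∀ x, 0 ≤ J x) (hJeven : ∀ x, J (-x) = J x)
    (CJ : ℝ) (hCJ : 0 < CJ)
    (hJmom : ∀ i j : Fin n, ∫ x, J x * (x i * x j) = if i = j then CJ else 0)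
    (α : ℝ) (hα : α ∈ Ioc (0:ℝ) 1) (H : ℝ) (hH : 0 ≤ H)
    (a u : EuclideanSpace ℝ (Fin n) → ℝ)
    (habdd : ∃ C, ∀ x, |a x| ≤ C) (hubdd : ∃ C, ∀ x, |u x| ≤ C)
    (hf : ContDiff ℝ 2 (fun x => a x * u x))
    (hfHolder : ∀ x y, ∀ i j : Fin n,
      |pd2 (fun z => a z * u z) x i j - pd2 (fun z => a z * u z) y i j| ≤ H * ‖x - y‖ ^ α) :
    ∃ C : ℝ, ∀ ε : ℝ, 0 < ε → ∀ x,
      |2 / (CJ * ε ^ (n + 2)) * (∫ y, J (ε⁻¹ • (x - y)) * (a y * u y - a x * u x)) -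
          lap (fun z => a z * u z) x| ≤ C * ε ^ α := by
  obtain ⟨hα0, hα1⟩ := hα
  set f : EuclideanSpace ℝ (Fin n) → ℝ := fun z => a z * u z with hf_def
  have hfy : ∀ y, a y * u y = f y := fun y => rfl
  simp only [hfy]
  set K : ℝ := (n : ℝ) ^ 2 * H with hK_def
  have hK : 0 ≤ K := by positivity
  have hopHol : ∀ p q : EuclideanSpace ℝ (Fin n),
      ‖fderiv ℝ (fderiv ℝ f) p - fderiv ℝ (fderiv ℝ f) q‖ ≤ K * ‖p - q‖ ^ α := by
    intro p q
    refine (bilin_opNorm_le _).trans ?_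
    have hent : ∀ i j : Fin n,
        |(fderiv ℝ (fderiv ℝ f) p - fderiv ℝ (fderiv ℝ f) q) (EuclideanSpace.single i 1)
          (EuclideanSpace.single j 1)| ≤ H * ‖p - q‖ ^ α := by
      intro i j
      have := hfHolder p q i j
      simpa [pd2, ContinuousLinearMap.sub_apply] using this
    calc (∑ i, ∑ j, |(fderiv ℝ (fderiv ℝ f) p - fderiv ℝ (fderiv ℝ f) q)
            (EuclideanSpace.single i 1) (EuclideanSpace.single j 1)|)
        ≤ ∑ _i : Fin n, ∑ _j : Fin n, H * ‖p - q‖ ^ α :=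
          Finset.sum_le_sum fun i _ => Finset.sum_le_sum fun j _ => hent i j
      _ = K * ‖p - q‖ ^ α := by
          simp only [Finset.sum_const, Finset.card_univ, Fintype.card_fin, nsmul_eq_mul,
            hK_def]
          ring
  set M : ℝ := ∫ z : EuclideanSpace ℝ (Fin n), J z * ‖z‖ ^ ((2:ℝ) + α) with hM_def
  have hM0 : 0 ≤ M := integral_nonneg fun z =>
    mul_nonneg (hJ0 z) (Real.rpow_nonneg (norm_nonneg _) _)
  refine ⟨2 * K * M / CJ, ?_⟩
  intro ε hε x
  have hfc : Continuous f := hf.continuous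
  set L : EuclideanSpace ℝ (Fin n) →L[ℝ] ℝ := fderiv ℝ f x with hL_def
  set B : EuclideanSpace ℝ (Fin n) →L[ℝ] (EuclideanSpace ℝ (Fin n) →L[ℝ] ℝ) :=
    fderiv ℝ (fderiv ℝ f) x with hB_def
  set R : EuclideanSpace ℝ (Fin n) → ℝ := fun z =>
    f (x + -(ε • z)) - f x - L (-(ε • z)) - (1 / 2 : ℝ) * B (-(ε • z)) (-(ε • z)) with hR_def
  have hRbound : ∀ z, |R z| ≤ K * ε ^ ((2:ℝ) + α) * ‖z‖ ^ ((2:ℝ) + α) := by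
    intro z
    have h1 : |R z| ≤ K * ‖-(ε • z)‖ ^ ((2:ℝ) + α) :=
      taylor_bound hα0 hα1 hK hf hopHol x (-(ε • z))
    have h2 : ‖-(ε • z)‖ ^ ((2:ℝ) + α) = ε ^ ((2:ℝ) + α) * ‖z‖ ^ ((2:ℝ) + α) := by
      rw [norm_neg, norm_smul, Real.norm_eq_abs, abs_of_pos hε,
        Real.mul_rpow hε.le (norm_nonneg _)]
    calc |R z| ≤ K * ‖-(ε • z)‖ ^ ((2:ℝ) + α) := h1
      _ = K * ε ^ ((2:ℝ) + α) * ‖z‖ ^ ((2:ℝ) + α) := by rw [h2]; ring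
  -- continuity facts
  have hcoord : ∀ i : Fin n, Continuous fun z : EuclideanSpace ℝ (Fin n) => z i :=
    fun i => (EuclideanSpace.proj (𝕜 := ℝ) i).continuous
  have hm : Continuous fun z : EuclideanSpace ℝ (Fin n) => -(ε • z) :=
    (continuous_id.const_smul ε).neg
  have hcB2 : Continuous fun w : EuclideanSpace ℝ (Fin n) => B w w :=
    B.isBoundedBilinearMap.continuous.comp (continuous_id.prodMk continuous_id)
  have hcR : Continuous R := by
    rw [hR_def]
    exact (((hfc.comp (continuous_const.add hm)).sub continuous_const).sub
      (L.continuous.comp hm)).sub (continuous_const.mul (hcB2.comp hm))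
  -- integrability facts
  have I1 : Integrable fun z => J z * L z := integrable_J_mul hJint hJcs L.continuous
  have I2 : Integrable fun z => J z * B z z := integrable_J_mul hJint hJcs hcB2
  have I5 : Integrable fun z => J z * R z := integrable_J_mul hJint hJcs hcR
  have Inorm : Integrable fun z : EuclideanSpace ℝ (Fin n) => J z * ‖z‖ ^ ((2:ℝ) + α) :=
    integrable_J_mul hJint hJcs
      (continuous_norm.rpow_const fun _ => Or.inr (by positivity))
  -- change of variables
  have hCV : (∫ y, J (ε⁻¹ • (x - y)) * (f y - f x))
      = ε ^ n * ∫ z, J z * (f (x + -(ε • z)) - f x) := by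
    set G : EuclideanSpace ℝ (Fin n) → ℝ := fun z => J z * (f (x + -(ε • z)) - f x) with hG
    have h0 : (∫ y, J (ε⁻¹ • (x - y)) * (f y - f x)) = ∫ y, G (ε⁻¹ • (x - y)) := by
      congr 1
      funext y
      rw [hG]
      simp only []
      rw [smul_inv_smul₀ (ne_of_gt hε)]
      have hxy : x + -(x - y) = y := by abel
      rw [hxy]
    rw [h0,
      show (∫ y, G (ε⁻¹ • (x - y))) = ∫ w, G (ε⁻¹ • w) from
        integral_sub_left_eq_self (fun w => G (ε⁻¹ • w)) volume x,
      show (∫ w, G (ε⁻¹ • w))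
          = (ε ^ Module.finrank ℝ (EuclideanSpace ℝ (Fin n))) • ∫ z, G z from
        MeasureTheory.Measure.integral_comp_inv_smul_of_nonneg volume G hε.le,
      finrank_euclideanSpace_fin, smul_eq_mul]
  -- splitting of the integral
  have hsplit : (∫ z, J z * (f (x + -(ε • z)) - f x))
      = (-ε) * (∫ z, J z * L z)
        + ((ε ^ 2 / 2) * (∫ z, J z * B z z) + ∫ z, J z * R z) := by
    have hpt : (fun z : EuclideanSpace ℝ (Fin n) => J z * (f (x + -(ε • z)) - f x))
        = fun z => (-ε) * (J z * L z) + ((ε ^ 2 / 2) * (J z * B z z) + J z * R z) := by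
      funext z
      have hLl : L (-(ε • z)) = -(ε * L z) := by
        rw [map_neg, _root_.map_smul, smul_eq_mul]
      have hBl : B (-(ε • z)) (-(ε • z)) = ε ^ 2 * B z z := by
        rw [map_neg, _root_.map_smul]
        simp only [ContinuousLinearMap.neg_apply, ContinuousLinearMap.smul_apply,
          map_neg, _root_.map_smul, smul_eq_mul]
        ring
      have hfz : f (x + -(ε • z)) - f x
          = R z + L (-(ε • z)) + (1 / 2 : ℝ) * B (-(ε • z)) (-(ε • z)) := by
        rw [hR_def]; ring
      rw [hfz, hLl, hBl]; ring
    have hInt1 : Integrable (fun z : EuclideanSpace ℝ (Fin n) => (-ε) * (J z * L z)) volume :=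
      I1.const_mul _
    have hInt2 : Integrable (fun z : EuclideanSpace ℝ (Fin n) => (ε ^ 2 / 2) * (J z * B z z))
        volume := I2.const_mul _
    have hInt23 : Integrable (fun z : EuclideanSpace ℝ (Fin n) =>
        (ε ^ 2 / 2) * (J z * B z z) + J z * R z) volume := hInt2.add I5
    rw [hpt, integral_add hInt1 hInt23, integral_add hInt2 I5, integral_const_mul,
      integral_const_mul]
  -- first moment vanishes
  have hL0 : (∫ z, J z * L z) = 0 := by
    have hpt : (fun z : EuclideanSpace ℝ (Fin n) => J z * L z)
        = fun z => ∑ i, L (EuclideanSpace.single i 1) * (J z * z i) := by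
      funext z
      rw [clm_apply_eq L z, Finset.mul_sum]
      refine Finset.sum_congr rfl fun j _ => ?_
      ring
    rw [hpt, integral_finset_sum _ fun i _ =>
      (integrable_J_mul hJint hJcs (hcoord i)).const_mul _]
    refine Finset.sum_eq_zero fun i _ => ?_
    rw [integral_const_mul, moment_odd hJeven i, mul_zero]
  -- second moment gives the Laplacian
  have hB0 : (∫ z, J z * B z z) = CJ * lap f x := by
    have hpt : (fun z : EuclideanSpace ℝ (Fin n) => J z * B z z)
        = fun z => ∑ i, ∑ j, B (EuclideanSpace.single i 1) (EuclideanSpace.single j 1)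
            * (J z * (z i * z j)) := by
      funext z
      rw [bilin_apply_eq B z z, Finset.mul_sum]
      refine Finset.sum_congr rfl fun i _ => ?_
      rw [Finset.mul_sum]
      refine Finset.sum_congr rfl fun j _ => ?_
      ring
    have hrow : ∀ i : Fin n,
        (∫ z : EuclideanSpace ℝ (Fin n), ∑ j,
            B (EuclideanSpace.single i 1) (EuclideanSpace.single j 1) * (J z * (z i * z j)))
        = B (EuclideanSpace.single i 1) (EuclideanSpace.single i 1) * CJ := by
      intro i
      rw [integral_finset_sum _ fun j _ =>
        (integrable_J_mul (g := fun z => z i * z j) hJint hJcs ((hcoord i).mul (hcoord j))).const_mul _]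
      have hterm : ∀ j : Fin n,
          (∫ z : EuclideanSpace ℝ (Fin n),
            B (EuclideanSpace.single i 1) (EuclideanSpace.single j 1) * (J z * (z i * z j)))
          = B (EuclideanSpace.single i 1) (EuclideanSpace.single j 1)
            * (if i = j then CJ else 0) := by
        intro j
        rw [integral_const_mul, hJmom i j]
      rw [Finset.sum_congr rfl fun j _ => hterm j]
      simp only [mul_ite, mul_zero, Finset.sum_ite_eq, Finset.mem_univ, if_true]
    rw [hpt, integral_finset_sum _ fun i _ => integrable_finset_sum _ fun j _ =>
      (integrable_J_mul (g := fun z => z i * z j) hJint hJcs ((hcoord i).mul (hcoord j))).const_mul _]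
    rw [Finset.sum_congr rfl fun i _ => hrow i]
    simp only [lap, pd2]
    rw [hB_def, Finset.mul_sum]
    exact Finset.sum_congr rfl fun i _ => mul_comm _ _
  -- remainder bound
  have hIR : |∫ z, J z * R z| ≤ K * ε ^ ((2:ℝ) + α) * M := by
    have h1 : |∫ z, J z * R z| ≤ ∫ z, |J z * R z| := by
      simpa only [Real.norm_eq_abs] using
        norm_integral_le_integral_norm (fun z : EuclideanSpace ℝ (Fin n) => J z * R z)
    refine h1.trans ?_
    have h2 : (∫ z, |J z * R z|)
        ≤ ∫ z : EuclideanSpace ℝ (Fin n),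
            (K * ε ^ ((2:ℝ) + α)) * (J z * ‖z‖ ^ ((2:ℝ) + α)) := by
      refine integral_mono_of_nonneg (Filter.Eventually.of_forall fun z => abs_nonneg _)
        (Inorm.const_mul _) (Filter.Eventually.of_forall fun z => ?_)
      simp only []
      rw [abs_mul, abs_of_nonneg (hJ0 z)]
      calc J z * |R z| ≤ J z * (K * ε ^ ((2:ℝ) + α) * ‖z‖ ^ ((2:ℝ) + α)) :=
            mul_le_mul_of_nonneg_left (hRbound z) (hJ0 z)
        _ = (K * ε ^ ((2:ℝ) + α)) * (J z * ‖z‖ ^ ((2:ℝ) + α)) := by ring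
    refine h2.trans (le_of_eq ?_)
    rw [integral_const_mul, ← hM_def]
  -- final assembly
  rw [hCV, hsplit, hL0, hB0]
  set IR := ∫ z, J z * R z with hIR_def
  have hkey : 2 / (CJ * ε ^ (n + 2))
        * (ε ^ n * ((-ε) * 0 + (ε ^ 2 / 2 * (CJ * lap f x) + IR))) - lap f x
      = 2 / (CJ * ε ^ 2) * IR := by
    have hε2 : (ε : ℝ) ^ (n + 2) = ε ^ n * ε ^ 2 := pow_add ε n 2
    field_simp
    ring
  rw [hkey, abs_mul, abs_of_pos (show (0:ℝ) < 2 / (CJ * ε ^ 2) by positivity)]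
  calc 2 / (CJ * ε ^ 2) * |IR|
      ≤ 2 / (CJ * ε ^ 2) * (K * ε ^ ((2:ℝ) + α) * M) :=
        mul_le_mul_of_nonneg_left hIR (by positivity)
    _ = 2 * K * M / CJ * ε ^ α := by
        rw [Real.rpow_add hε, Real.rpow_two]
        field_simp
end
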